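/- In B_{m,n}(q,t), the elements e_k are invariant under the bar involution: ē_k = e_k for all 0 ≤ k ≤ min{m,n}. -/

import Mathlib

open scoped Classical

noncomputable section

/-- The field `ℚ(q,t)` of rational functions in two indeterminates over `ℚ`. -/
abbrev KK : Type := FractionRing (MvPolynomial (Fin 2) ℚ)

/-- The indeterminate `q` viewed inside `ℚ(q,t)`. -/
def qv : KK := algebraMap (MvPolynomial (Fin 2) ℚ) KK (MvPolynomial.X 0)

/-- The indeterminate `t` viewed inside `ℚ(q,t)`. -/
def tv : KK := algebraMap (MvPolynomial (Fin 2) ℚ) KK (MvPolynomial.X 1)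

/-- The valid indices `i` for the generators `H i` of `B_{m,n}(q,t)`:
`1 ≤ i ≤ n - 1` or `1 ≤ -i ≤ m - 1`. -/
def validIdx (m n : ℕ) (i : ℤ) : Prop :=
  (1 ≤ i ∧ i ≤ (n : ℤ) - 1) ∨ (1 ≤ -i ∧ -i ≤ (m : ℤ) - 1)

/-- Generators of the quantized walled Brauer algebra `B_{m,n}(q,t)`. -/
inductive WBgen (m n : ℕ) : Type
  | H (i : ℤ) (h : validIdx m n i) : WBgen m n
  | E : WBgen m n

/-- The generator `H i` in the free algebra. -/
def fH (m n : ℕ) (i : ℤ) (h : validIdx m n i) : FreeAlgebra KK (WBgen m n) :=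
  FreeAlgebra.ι KK (WBgen.H i h)

/-- The generator `e` in the free algebra. -/
def fE (m n : ℕ) : FreeAlgebra KK (WBgen m n) := FreeAlgebra.ι KK WBgen.E

/-- The element `H i - (q - q⁻¹)`, which becomes the inverse of `H i` in the quotient. -/
def fHinv (m n : ℕ) (i : ℤ) (h : validIdx m n i) : FreeAlgebra KK (WBgen m n) :=
  fH m n i h - algebraMap KK _ (qv - qv⁻¹)

/-- The defining relations of the quantized walled Brauer algebra `B_{m,n}(q,t)`. -/
inductive WBrel (m n : ℕ) :
    FreeAlgebra KK (WBgen m n) → FreeAlgebra KK (WBgen m n) → Prop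
  | quad (i : ℤ) (h : validIdx m n i) :
      WBrel m n ((fH m n i h - algebraMap KK _ qv) * (fH m n i h + algebraMap KK _ qv⁻¹)) 0
  | comm (i : ℤ) (hi : validIdx m n i) (j : ℤ) (hj : validIdx m n j) (hij : 1 < |i - j|) :
      WBrel m n (fH m n i hi * fH m n j hj) (fH m n j hj * fH m n i hi)
  | braid (i : ℤ) (hi : validIdx m n i) (hi1 : validIdx m n (i + 1)) :
      WBrel m n (fH m n i hi * fH m n (i + 1) hi1 * fH m n i hi)
        (fH m n (i + 1) hi1 * fH m n i hi * fH m n (i + 1) hi1)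
  | commE (i : ℤ) (hi : validIdx m n i) (h2 : 2 ≤ |i|) :
      WBrel m n (fH m n i hi * fE m n) (fE m n * fH m n i hi)
  | eHe (i : ℤ) (hi : validIdx m n i) (h : i = 1 ∨ i = -1) :
      WBrel m n (fE m n * fH m n i hi * fE m n) (algebraMap KK _ tv * fE m n)
  | esq : WBrel m n (fE m n * fE m n)
      (algebraMap KK _ ((tv - tv⁻¹) / (qv - qv⁻¹)) * fE m n)
  | rel7 (h1 : validIdx m n 1) (hm : validIdx m n (-1)) :
      WBrel m n (fE m n * fHinv m n (-1) hm * fH m n 1 h1 * fE m n * fH m n (-1) hm)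
        (fE m n * fHinv m n (-1) hm * fH m n 1 h1 * fE m n * fH m n 1 h1)
  | rel8 (h1 : validIdx m n 1) (hm : validIdx m n (-1)) :
      WBrel m n (fH m n (-1) hm * fE m n * fHinv m n (-1) hm * fH m n 1 h1 * fE m n)
        (fH m n 1 h1 * fE m n * fHinv m n (-1) hm * fH m n 1 h1 * fE m n)

/-- The quantized walled Brauer algebra `B_{m,n}(q,t)`. -/
abbrev WB (m n : ℕ) : Type := RingQuot (WBrel m n)

/-- The generator `H i` of `B_{m,n}(q,t)`. -/
def HB (m n : ℕ) (i : ℤ) (h : validIdx m n i) : WB m n :=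
  RingQuot.mkAlgHom KK (WBrel m n) (fH m n i h)

/-- The generator `e` of `B_{m,n}(q,t)`. -/
def EB (m n : ℕ) : WB m n := RingQuot.mkAlgHom KK (WBrel m n) (fE m n)

/-- The inverse `H i⁻¹ = H i - (q - q⁻¹)` of the generator `H i`. -/
def HBinv (m n : ℕ) (i : ℤ) (h : validIdx m n i) : WB m n :=
  HB m n i h - algebraMap KK _ (qv - qv⁻¹)

/-- Total version of `H i` (equal to `H i` for valid `i`, junk value `1` otherwise). -/
def Htil (m n : ℕ) (i : ℤ) : WB m n :=
  if h : validIdx m n i then HB m n i h else 1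

/-- Total version of `H i⁻¹` (equal to `H i⁻¹` for valid `i`, junk value `1` otherwise). -/
def Htilinv (m n : ℕ) (i : ℤ) : WB m n :=
  if h : validIdx m n i then HBinv m n i h else 1

/-- The elements `e_k`:  `e_0 = 1`, `e_1 = e`, and
`e_{k+1} = e ⬝ H_{-1}⁻¹ H_{-2}⁻¹ ⋯ H_{-k}⁻¹ ⬝ H_1 H_2 ⋯ H_k ⬝ e_k`. -/
def ek (m n : ℕ) : ℕ → WB m n
  | 0 => 1
  | k + 1 =>
      EB m n *
        (((List.range k).map (fun j => Htilinv m n (-((j + 1 : ℕ) : ℤ)))).prod) *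
        (((List.range k).map (fun j => Htil m n ((j + 1 : ℕ) : ℤ))).prod) *
        ek m n k

namespace WBP

variable {m n : ℕ}

def dq : KK := qv - qv⁻¹

def sc {m n : ℕ} (c : KK) : WB m n := algebraMap KK (WB m n) c
def Ee {m n : ℕ} : WB m n := EB m n
def g {m n : ℕ} (i : ℕ) : WB m n := Htil m n (-(i:ℤ))
def h {m n : ℕ} (i : ℕ) : WB m n := Htil m n (i:ℤ)
def gi {m n : ℕ} (i : ℕ) : WB m n := Htilinv m n (-(i:ℤ))
def hi {m n : ℕ} (i : ℕ) : WB m n := Htilinv m n (i:ℤ)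

lemma qv_ne : (qv : KK) ≠ 0 := by
  intro hq
  have := (IsFractionRing.to_map_eq_zero_iff (K := KK)).mp hq
  exact MvPolynomial.X_ne_zero (0 : Fin 2) this

lemma sc_mul (c d : KK) : (sc c : WB m n) * sc d = sc (c*d) := by
  simp [sc, map_mul]

lemma sc_comm (c : KK) (x : WB m n) : sc c * x = x * sc c := (Algebra.commutes c x)

lemma HB_quad (i : ℤ) (hv : validIdx m n i) :
    (HB m n i hv - sc qv) * (HB m n i hv + sc qv⁻¹) = 0 := by
  have := RingQuot.mkAlgHom_rel KK (WBrel.quad i hv)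
  simpa [fH, HB, sc, map_mul, map_sub, map_add, map_zero] using this

lemma sc_qq : (sc qv : WB m n) * sc qv⁻¹ = 1 := by
  rw [sc_mul, mul_inv_cancel₀ qv_ne]; simp [sc]

lemma sc_dq_add : (sc dq : WB m n) + sc qv⁻¹ = sc qv := by
  have h3 := (algebraMap KK (WB m n)).map_add dq qv⁻¹
  have h4 : dq + qv⁻¹ = qv := sub_add_cancel qv qv⁻¹
  rw [sc, sc, sc, ← h3, h4]

lemma quad_plus (i : ℤ) (hv : validIdx m n i) :
    HB m n i hv * HB m n i hv + HB m n i hv * sc qv⁻¹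
      = HB m n i hv * sc dq + HB m n i hv * sc qv⁻¹ + 1 := by
  set x := HB m n i hv with hx
  have h0 := HB_quad i hv
  have e1 := sub_mul x (sc qv) (x + sc qv⁻¹)
  rw [e1] at h0
  have h0' : x * (x + sc qv⁻¹) = sc qv * (x + sc qv⁻¹) := sub_eq_zero.mp h0
  have h2 : x*x + x*sc qv⁻¹ = sc qv * x + sc qv * sc qv⁻¹ := by
    rw [← mul_add, ← mul_add, h0']
  rw [sc_qq, sc_comm] at h2
  rw [h2, ← sc_dq_add, mul_add]

lemma HB_mul_HBinv (i : ℤ) (hv : validIdx m n i) :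
    HB m n i hv * HBinv m n i hv = 1 := by
  have h2 := quad_plus i hv
  set x := HB m n i hv with hx
  show x * HBinv m n i hv = 1
  have hbi : HBinv m n i hv = x - sc dq := rfl
  rw [hbi]
  have e3 := mul_sub x x (sc dq)
  rw [e3]
  calc x*x - x*sc dq = (x*x + x*sc qv⁻¹) - (x*sc dq + x*sc qv⁻¹) := by abel
    _ = (x*sc dq + x*sc qv⁻¹ + 1) - (x*sc dq + x*sc qv⁻¹) := by rw [h2]
    _ = 1 := by abel

lemma HBinv_mul_HB (i : ℤ) (hv : validIdx m n i) :
    HBinv m n i hv * HB m n i hv = 1 := by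
  have h2 := quad_plus i hv
  set x := HB m n i hv with hx
  show HBinv m n i hv * x = 1
  have hbi : HBinv m n i hv = x - sc dq := rfl
  rw [hbi]
  have e3 := sub_mul x (sc dq) x
  rw [e3, sc_comm dq x]
  calc x*x - x*sc dq = (x*x + x*sc qv⁻¹) - (x*sc dq + x*sc qv⁻¹) := by abel
    _ = (x*sc dq + x*sc qv⁻¹ + 1) - (x*sc dq + x*sc qv⁻¹) := by rw [h2]
    _ = 1 := by abel

lemma h_hi (i : ℕ) : (h i : WB m n) * hi i = 1 := by
  unfold h hi Htil Htilinv
  split_ifs with hv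
  · exact HB_mul_HBinv _ hv
  · simp

lemma hi_h (i : ℕ) : (hi i : WB m n) * h i = 1 := by
  unfold h hi Htil Htilinv
  split_ifs with hv
  · exact HBinv_mul_HB _ hv
  · simp

lemma g_gi (i : ℕ) : (g i : WB m n) * gi i = 1 := by
  unfold g gi Htil Htilinv
  split_ifs with hv
  · exact HB_mul_HBinv _ hv
  · simp

lemma gi_g (i : ℕ) : (gi i : WB m n) * g i = 1 := by
  unfold g gi Htil Htilinv
  split_ifs with hv
  · exact HBinv_mul_HB _ hv
  · simp

lemma g_eq (i : ℕ) (h1 : 1 ≤ i) (h2 : i + 1 ≤ m) : (g i : WB m n) = gi i + sc dq := by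
  have hv : validIdx m n (-(i:ℤ)) := by
    right
    constructor <;> [skip; skip] <;> omega
  unfold g gi Htil Htilinv
  rw [dif_pos hv, dif_pos hv]
  have : HBinv m n _ hv = HB m n _ hv - sc dq := rfl
  rw [this]
  abel

lemma h_eq (i : ℕ) (h1 : 1 ≤ i) (h2 : i + 1 ≤ n) : (h i : WB m n) = hi i + sc dq := by
  have hv : validIdx m n (i:ℤ) := by
    left
    constructor <;> omega
  unfold h hi Htil Htilinv
  rw [dif_pos hv, dif_pos hv]
  have : HBinv m n _ hv = HB m n _ hv - sc dq := rfl
  rw [this]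
  abel

end WBP

namespace WBP

variable {m n : ℕ}

lemma vpos {i : ℕ} (h1 : 1 ≤ i) (h2 : i + 1 ≤ n) : validIdx m n (i:ℤ) := by
  left; constructor <;> omega

lemma vneg {i : ℕ} (h1 : 1 ≤ i) (h2 : i + 1 ≤ m) : validIdx m n (-(i:ℤ)) := by
  right; constructor <;> omega

lemma h_val {i : ℕ} (h1 : 1 ≤ i) (h2 : i + 1 ≤ n) :
    (h i : WB m n) = HB m n (i:ℤ) (vpos h1 h2) := by
  unfold h Htil; rw [dif_pos]

lemma g_val {i : ℕ} (h1 : 1 ≤ i) (h2 : i + 1 ≤ m) :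
    (g i : WB m n) = HB m n (-(i:ℤ)) (vneg h1 h2) := by
  unfold g Htil; rw [dif_pos]

lemma hi_val {i : ℕ} (h1 : 1 ≤ i) (h2 : i + 1 ≤ n) :
    (hi i : WB m n) = HBinv m n (i:ℤ) (vpos h1 h2) := by
  unfold hi Htilinv; rw [dif_pos]

lemma gi_val {i : ℕ} (h1 : 1 ≤ i) (h2 : i + 1 ≤ m) :
    (gi i : WB m n) = HBinv m n (-(i:ℤ)) (vneg h1 h2) := by
  unfold gi Htilinv; rw [dif_pos]

lemma commute_Htil {i j : ℤ} (hij : 1 < |i - j|) :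
    Commute (Htil m n i) (Htil m n j) := by
  unfold Htil
  split_ifs with hv1 hv2 hv2
  · have := RingQuot.mkAlgHom_rel KK (WBrel.comm i hv1 j hv2 hij)
    have h' : HB m n i hv1 * HB m n j hv2 = HB m n j hv2 * HB m n i hv1 := by
      simpa [fH, HB, map_mul] using this
    exact h'
  · exact Commute.one_right _
  · exact Commute.one_left _
  · exact Commute.one_left _

lemma commute_of_inv {M : Type*} [Monoid M] {x y z : M} (hc : Commute x y)
    (h1 : y*z = 1) (h2 : z*y = 1) : Commute x z := by
  have key : x*z = z*x := by
    calc x*z = (z*y)*(x*z) := by rw [h2, one_mul]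
      _ = z*(y*x)*z := by simp only [mul_assoc]
      _ = z*(x*y)*z := by rw [hc.eq]
      _ = (z*x)*(y*z) := by simp only [mul_assoc]
      _ = z*x := by rw [h1, mul_one]
  exact key

lemma Htil_mul_inv (i : ℤ) : Htil m n i * Htilinv m n i = 1 := by
  unfold Htil Htilinv
  split_ifs with hv
  · exact HB_mul_HBinv _ hv
  · simp

lemma Htilinv_mul (i : ℤ) : Htilinv m n i * Htil m n i = 1 := by
  unfold Htil Htilinv
  split_ifs with hv
  · exact HBinv_mul_HB _ hv
  · simp

lemma commute_inv_right {x : WB m n} {i : ℤ} (hc : Commute x (Htil m n i)) :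
    Commute x (Htilinv m n i) :=
  commute_of_inv hc (Htil_mul_inv i) (Htilinv_mul i)

lemma commute_E_Htil {i : ℤ} (h2 : 2 ≤ |i|) : Commute (EB m n) (Htil m n i) := by
  unfold Htil
  split_ifs with hv
  · have := RingQuot.mkAlgHom_rel KK (WBrel.commE i hv h2)
    have h' : HB m n i hv * EB m n = EB m n * HB m n i hv := by
      simpa [fH, fE, HB, EB, map_mul] using this
    exact h'.symm
  · exact Commute.one_right _

-- ℕ-level commute lemmas
lemma cEh {i : ℕ} (h2 : 2 ≤ i) : Commute (Ee : WB m n) (h i) :=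
  commute_E_Htil (by rw [abs_of_nonneg (by omega : (0:ℤ) ≤ (i:ℤ))]; omega)

lemma cEg {i : ℕ} (h2 : 2 ≤ i) : Commute (Ee : WB m n) (g i) :=
  commute_E_Htil (by rw [abs_neg, abs_of_nonneg (by omega : (0:ℤ) ≤ (i:ℤ))]; omega)

lemma cEhi {i : ℕ} (h2 : 2 ≤ i) : Commute (Ee : WB m n) (hi i) :=
  commute_inv_right (cEh h2)

lemma cEgi {i : ℕ} (h2 : 2 ≤ i) : Commute (Ee : WB m n) (gi i) :=
  commute_inv_right (cEg h2)

lemma Htil_invalid {i : ℤ} (hv : ¬ validIdx m n i) : Htil m n i = 1 := by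
  unfold Htil; rw [dif_neg hv]

lemma Htilinv_invalid {i : ℤ} (hv : ¬ validIdx m n i) : Htilinv m n i = 1 := by
  unfold Htilinv; rw [dif_neg hv]

lemma not_valid_zero : ¬ validIdx m n 0 := by
  unfold validIdx; push_neg; omega

lemma g_zero : (g 0 : WB m n) = 1 := by
  unfold g; rw [show -((0:ℕ):ℤ) = 0 by simp]; exact Htil_invalid not_valid_zero

lemma h_zero : (h 0 : WB m n) = 1 := by
  unfold h; rw [show ((0:ℕ):ℤ) = 0 by simp]; exact Htil_invalid not_valid_zero

lemma gi_zero : (gi 0 : WB m n) = 1 := by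
  unfold gi; rw [show -((0:ℕ):ℤ) = 0 by simp]; exact Htilinv_invalid not_valid_zero

lemma hi_zero : (hi 0 : WB m n) = 1 := by
  unfold hi; rw [show ((0:ℕ):ℤ) = 0 by simp]; exact Htilinv_invalid not_valid_zero

lemma cgh (i j : ℕ) : Commute (g i : WB m n) (h j) := by
  rcases Nat.eq_zero_or_pos i with hi0 | hi1
  · subst hi0; rw [g_zero]; exact Commute.one_left _
  rcases Nat.eq_zero_or_pos j with hj0 | hj1
  · subst hj0; rw [h_zero]; exact Commute.one_right _
  exact commute_Htil (by rw [show -(i:ℤ) - (j:ℤ) = -((i:ℤ)+(j:ℤ)) by ring, abs_neg,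
                           abs_of_nonneg (by omega : (0:ℤ) ≤ (i:ℤ)+(j:ℤ))]; omega)

lemma cghi (i j : ℕ) : Commute (g i : WB m n) (hi j) := commute_inv_right (cgh i j)

lemma cgih (i j : ℕ) : Commute (gi i : WB m n) (h j) := (commute_inv_right (cgh i j).symm).symm

lemma cgihi (i j : ℕ) : Commute (gi i : WB m n) (hi j) := commute_inv_right (cgih i j)

lemma chh {i j : ℕ} (hij : i + 2 ≤ j) : Commute (h i : WB m n) (h j) := by
  exact commute_Htil (by rw [show (i:ℤ) - (j:ℤ) = -((j:ℤ)-(i:ℤ)) by ring, abs_neg,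
                           abs_of_nonneg (by omega : (0:ℤ) ≤ (j:ℤ)-(i:ℤ))]; omega)

lemma cgg {i j : ℕ} (hij : i + 2 ≤ j) : Commute (g i : WB m n) (g j) := by
  exact commute_Htil (by rw [show -(i:ℤ) - -(j:ℤ) = (j:ℤ)-(i:ℤ) by ring]
                         rw [abs_of_nonneg (by omega : (0:ℤ) ≤ (j:ℤ)-(i:ℤ))]
                         omega)

lemma chhi {i j : ℕ} (hij : i + 2 ≤ j) : Commute (h i : WB m n) (hi j) :=
  commute_inv_right (chh hij)

lemma chih {i j : ℕ} (hij : i + 2 ≤ j) : Commute (hi i : WB m n) (h j) :=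
  (commute_inv_right (chh hij).symm).symm

lemma chihi {i j : ℕ} (hij : i + 2 ≤ j) : Commute (hi i : WB m n) (hi j) :=
  commute_inv_right (chih hij)

lemma cggi {i j : ℕ} (hij : i + 2 ≤ j) : Commute (g i : WB m n) (gi j) :=
  commute_inv_right (cgg hij)

lemma cgig {i j : ℕ} (hij : i + 2 ≤ j) : Commute (gi i : WB m n) (g j) :=
  (commute_inv_right (cgg hij).symm).symm

lemma cgigi {i j : ℕ} (hij : i + 2 ≤ j) : Commute (gi i : WB m n) (gi j) :=
  commute_inv_right (cgig hij)

end WBP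

namespace WBP

variable {m n : ℕ}

lemma cast_succ (i : ℕ) : ((i+1:ℕ):ℤ) = (i:ℤ)+1 := by push_cast; ring

lemma braid_h {i : ℕ} (h1 : 1 ≤ i) (h2 : i + 2 ≤ n) :
    (h i : WB m n) * h (i+1) * h i = h (i+1) * h i * h (i+1) := by
  have hv1 : validIdx m n (i:ℤ) := vpos h1 (by omega)
  have hv2 : validIdx m n ((i:ℤ)+1) := by left; constructor <;> omega
  have hc : (h (i+1) : WB m n) = Htil m n ((i:ℤ)+1) := by
    unfold h; rw [cast_succ]
  have hh : (h i : WB m n) = Htil m n (i:ℤ) := rfl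
  rw [hc, hh]
  unfold Htil
  rw [dif_pos hv1, dif_pos hv2]
  have := RingQuot.mkAlgHom_rel KK (WBrel.braid (i:ℤ) hv1 hv2)
  simpa [fH, HB, map_mul] using this

lemma braid_g {i : ℕ} (h1 : 1 ≤ i) (h2 : i + 2 ≤ m) :
    (g i : WB m n) * g (i+1) * g i = g (i+1) * g i * g (i+1) := by
  have hv1 : validIdx m n (-((i:ℤ)+1)) := by right; constructor <;> omega
  have hv2 : validIdx m n (-((i:ℤ)+1)+1) := by right; constructor <;> omega
  have hc : (g (i+1) : WB m n) = Htil m n (-((i:ℤ)+1)) := by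
    unfold g; rw [cast_succ]
  have hg : (g i : WB m n) = Htil m n (-((i:ℤ)+1)+1) := by
    unfold g; congr 1; ring
  rw [hc, hg]
  unfold Htil
  rw [dif_pos hv1, dif_pos hv2]
  have := RingQuot.mkAlgHom_rel KK (WBrel.braid (-((i:ℤ)+1)) hv1 hv2)
  have h' : HB m n (-((i:ℤ)+1)) hv1 * HB m n (-((i:ℤ)+1)+1) hv2 * HB m n (-((i:ℤ)+1)) hv1
      = HB m n (-((i:ℤ)+1)+1) hv2 * HB m n (-((i:ℤ)+1)) hv1 * HB m n (-((i:ℤ)+1)+1) hv2 := by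
    simpa only [fH, HB, map_mul] using this
  exact h'.symm

lemma Eh1E (hn2 : 2 ≤ n) : (Ee : WB m n) * h 1 * Ee = sc tv * Ee := by
  have hv : validIdx m n ((1:ℕ):ℤ) := vpos le_rfl (by omega)
  have hh : (h 1 : WB m n) = Htil m n ((1:ℕ):ℤ) := rfl
  rw [hh]
  unfold Htil Ee
  rw [dif_pos hv]
  have := RingQuot.mkAlgHom_rel KK
    (WBrel.eHe ((1:ℕ):ℤ) hv (Or.inl (by norm_num)))
  simpa [fH, fE, HB, EB, sc, map_mul] using this

lemma Eg1E (hm2 : 2 ≤ m) : (Ee : WB m n) * g 1 * Ee = sc tv * Ee := by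
  have hv : validIdx m n (-((1:ℕ):ℤ)) := vneg le_rfl (by omega)
  have hh : (g 1 : WB m n) = Htil m n (-((1:ℕ):ℤ)) := rfl
  rw [hh]
  unfold Htil Ee
  rw [dif_pos hv]
  have := RingQuot.mkAlgHom_rel KK
    (WBrel.eHe (-((1:ℕ):ℤ)) hv (Or.inr (by norm_num)))
  simpa [fH, fE, HB, EB, sc, map_mul] using this

lemma rel7 (hm2 : 2 ≤ m) (hn2 : 2 ≤ n) :
    (Ee : WB m n) * gi 1 * h 1 * Ee * g 1 = Ee * gi 1 * h 1 * Ee * h 1 := by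
  have hvp : validIdx m n (1:ℤ) := by left; constructor <;> omega
  have hvm : validIdx m n (-1:ℤ) := by right; constructor <;> omega
  have e1 : (h 1 : WB m n) = HB m n (1:ℤ) hvp := by
    unfold h Htil; rw [show ((1:ℕ):ℤ) = (1:ℤ) by norm_num]; rw [dif_pos hvp]
  have e2 : (g 1 : WB m n) = HB m n (-1:ℤ) hvm := by
    unfold g Htil; rw [show -((1:ℕ):ℤ) = (-1:ℤ) by norm_num]; rw [dif_pos hvm]
  have e3 : (gi 1 : WB m n) = HBinv m n (-1:ℤ) hvm := by
    unfold gi Htilinv; rw [show -((1:ℕ):ℤ) = (-1:ℤ) by norm_num]; rw [dif_pos hvm]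
  rw [e1, e2, e3]
  unfold Ee
  have := RingQuot.mkAlgHom_rel KK (WBrel.rel7 hvp hvm)
  have hinv : RingQuot.mkAlgHom KK (WBrel m n) (fHinv m n (-1) hvm) = HBinv m n (-1:ℤ) hvm := by
    unfold fHinv HBinv HB fH
    simp [map_sub, sc]
  simpa [fH, fE, HB, EB, map_mul, hinv] using this

lemma rel8 (hm2 : 2 ≤ m) (hn2 : 2 ≤ n) :
    (g 1 : WB m n) * Ee * gi 1 * h 1 * Ee = h 1 * Ee * gi 1 * h 1 * Ee := by
  have hvp : validIdx m n (1:ℤ) := by left; constructor <;> omega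
  have hvm : validIdx m n (-1:ℤ) := by right; constructor <;> omega
  have e1 : (h 1 : WB m n) = HB m n (1:ℤ) hvp := by
    unfold h Htil; rw [show ((1:ℕ):ℤ) = (1:ℤ) by norm_num]; rw [dif_pos hvp]
  have e2 : (g 1 : WB m n) = HB m n (-1:ℤ) hvm := by
    unfold g Htil; rw [show -((1:ℕ):ℤ) = (-1:ℤ) by norm_num]; rw [dif_pos hvm]
  have e3 : (gi 1 : WB m n) = HBinv m n (-1:ℤ) hvm := by
    unfold gi Htilinv; rw [show -((1:ℕ):ℤ) = (-1:ℤ) by norm_num]; rw [dif_pos hvm]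
  rw [e1, e2, e3]
  unfold Ee
  have := RingQuot.mkAlgHom_rel KK (WBrel.rel8 hvp hvm)
  have hinv : RingQuot.mkAlgHom KK (WBrel m n) (fHinv m n (-1) hvm) = HBinv m n (-1:ℤ) hvm := by
    unfold fHinv HBinv HB fH
    simp [map_sub, sc]
  simpa [fH, fE, HB, EB, map_mul, hinv] using this

end WBP

namespace WBP

section BraidVariants
variable {M : Type*} [Monoid M] {a b ai bi : M}

lemma bv1 (ha : a*ai = 1) (ha' : ai*a = 1) (hb : b*bi = 1) (hb' : bi*b = 1)
    (br : a*b*a = b*a*b) : ai*(b*a) = b*(a*bi) := by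
  let ua : Mˣ := ⟨a, ai, ha, ha'⟩
  let ub : Mˣ := ⟨b, bi, hb, hb'⟩
  have brU : ua*ub*ua = ub*ua*ub := Units.ext (by simpa [ua, ub, mul_assoc] using br)
  have key : ua⁻¹*ub*ua = ub*ua*ub⁻¹ := by
    calc ua⁻¹*ub*ua = ua⁻¹*(ub*ua*ub)*ub⁻¹ := by group
      _ = ua⁻¹*(ua*ub*ua)*ub⁻¹ := by rw [brU]
      _ = ub*ua*ub⁻¹ := by group
  have := congrArg (Units.val) key
  simpa [ua, ub, mul_assoc] using this

lemma bv2 (ha : a*ai = 1) (ha' : ai*a = 1) (hb : b*bi = 1) (hb' : bi*b = 1)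
    (br : a*b*a = b*a*b) : a*(b*ai) = bi*(a*b) := by
  let ua : Mˣ := ⟨a, ai, ha, ha'⟩
  let ub : Mˣ := ⟨b, bi, hb, hb'⟩
  have brU : ua*ub*ua = ub*ua*ub := Units.ext (by simpa [ua, ub, mul_assoc] using br)
  have key : ua*ub*ua⁻¹ = ub⁻¹*(ua*ub) := by
    calc ua*ub*ua⁻¹ = ub⁻¹*(ub*ua*ub)*ua⁻¹ := by group
      _ = ub⁻¹*(ua*ub*ua)*ua⁻¹ := by rw [brU]
      _ = ub⁻¹*(ua*ub) := by group
  have := congrArg (Units.val) key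
  simpa [ua, ub, mul_assoc] using this

lemma bv3 (ha : a*ai = 1) (ha' : ai*a = 1) (hb : b*bi = 1) (hb' : bi*b = 1)
    (br : a*b*a = b*a*b) : b*(ai*bi) = ai*(bi*a) := by
  let ua : Mˣ := ⟨a, ai, ha, ha'⟩
  let ub : Mˣ := ⟨b, bi, hb, hb'⟩
  have brU : ua*ub*ua = ub*ua*ub := Units.ext (by simpa [ua, ub, mul_assoc] using br)
  have brIU : ua⁻¹*ub⁻¹*ua⁻¹ = ub⁻¹*ua⁻¹*ub⁻¹ := by
    have := congrArg (·⁻¹) brU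
    simpa [mul_assoc] using this
  have key : ub*ua⁻¹*ub⁻¹ = ua⁻¹*(ub⁻¹*ua) := by
    calc ub*ua⁻¹*ub⁻¹ = ub*(ua⁻¹*ub⁻¹*ua⁻¹)*ua := by group
      _ = ub*(ub⁻¹*ua⁻¹*ub⁻¹)*ua := by rw [brIU]
      _ = ua⁻¹*(ub⁻¹*ua) := by group
  have := congrArg (Units.val) key
  simpa [ua, ub, mul_assoc] using this

lemma bv4 (ha : a*ai = 1) (ha' : ai*a = 1) (hb : b*bi = 1) (hb' : bi*b = 1)
    (br : a*b*a = b*a*b) : bi*(ai*b) = a*(bi*ai) := by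
  let ua : Mˣ := ⟨a, ai, ha, ha'⟩
  let ub : Mˣ := ⟨b, bi, hb, hb'⟩
  have brU : ua*ub*ua = ub*ua*ub := Units.ext (by simpa [ua, ub, mul_assoc] using br)
  have brIU : ua⁻¹*ub⁻¹*ua⁻¹ = ub⁻¹*ua⁻¹*ub⁻¹ := by
    have := congrArg (·⁻¹) brU
    simpa [mul_assoc] using this
  have key : ub⁻¹*ua⁻¹*ub = ua*(ub⁻¹*ua⁻¹) := by
    calc ub⁻¹*ua⁻¹*ub = ua*(ua⁻¹*ub⁻¹*ua⁻¹)*ub := by group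
      _ = ua*(ub⁻¹*ua⁻¹*ub⁻¹)*ub := by rw [brIU]
      _ = ua*(ub⁻¹*ua⁻¹) := by group
  have := congrArg (Units.val) key
  simpa [ua, ub, mul_assoc] using this

end BraidVariants

variable {m n : ℕ}

-- specialized braid variants
lemma brv1_h {i : ℕ} (h1 : 1 ≤ i) (h2 : i + 2 ≤ n) :
    (hi i : WB m n) * (h (i+1) * h i) = h (i+1) * (h i * hi (i+1)) :=
  bv1 (h_hi i) (hi_h i) (h_hi (i+1)) (hi_h (i+1)) (braid_h h1 h2)

lemma brv2_g {i : ℕ} (h1 : 1 ≤ i) (h2 : i + 2 ≤ m) :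
    (g i : WB m n) * (g (i+1) * gi i) = gi (i+1) * (g i * g (i+1)) :=
  bv2 (g_gi i) (gi_g i) (g_gi (i+1)) (gi_g (i+1)) (braid_g h1 h2)

lemma brv3_g {i : ℕ} (h1 : 1 ≤ i) (h2 : i + 2 ≤ m) :
    (g (i+1) : WB m n) * (gi i * gi (i+1)) = gi i * (gi (i+1) * g i) :=
  bv3 (g_gi i) (gi_g i) (g_gi (i+1)) (gi_g (i+1)) (braid_g h1 h2)

lemma brv4_g {i : ℕ} (h1 : 1 ≤ i) (h2 : i + 2 ≤ m) :
    (gi (i+1) : WB m n) * (gi i * g (i+1)) = g i * (gi (i+1) * gi i) :=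
  bv4 (g_gi i) (gi_g i) (g_gi (i+1)) (gi_g (i+1)) (braid_g h1 h2)

end WBP

namespace WBP

variable {m n : ℕ}

-- ascending products (p letters starting at a)
def giA {m n : ℕ} : ℕ → ℕ → WB m n
  | _, 0 => 1
  | a, p+1 => gi a * giA (a+1) p

def gA {m n : ℕ} : ℕ → ℕ → WB m n
  | _, 0 => 1
  | a, p+1 => g a * gA (a+1) p

def hA {m n : ℕ} : ℕ → ℕ → WB m n
  | _, 0 => 1
  | a, p+1 => h a * hA (a+1) p

def hiA {m n : ℕ} : ℕ → ℕ → WB m n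
  | _, 0 => 1
  | a, p+1 => hi a * hiA (a+1) p

-- descending products (p letters, from a+p-1 down to a)
def giD {m n : ℕ} : ℕ → ℕ → WB m n
  | _, 0 => 1
  | a, p+1 => gi (a+p) * giD a p

def hD {m n : ℕ} : ℕ → ℕ → WB m n
  | _, 0 => 1
  | a, p+1 => h (a+p) * hD a p

def cc {m n : ℕ} (i : ℕ) : WB m n := gi i * h i
def cb {m n : ℕ} (i : ℕ) : WB m n := g i * hi i

def cblock {m n : ℕ} : ℕ → ℕ → WB m n
  | _, 0 => 1
  | a, p+1 => cc a * cblock (a+1) p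

def cbar {m n : ℕ} : ℕ → ℕ → WB m n
  | _, 0 => 1
  | a, p+1 => cb a * cbar (a+1) p

def Dd {m n : ℕ} : ℕ → WB m n
  | 0 => 1
  | p+1 => cc (p+1) * Dd p

def Nb {m n : ℕ} (r : ℕ) : ℕ → WB m n
  | 0 => 1
  | p+1 => cblock (p+1) r * Nb r p

def Nb' {m n : ℕ} (r : ℕ) : ℕ → WB m n
  | 0 => 1
  | p+1 => cblock (p+2) r * Nb' r p

-- append lemmas
lemma giA_app (a p : ℕ) : (giA a (p+1) : WB m n) = giA a p * gi (a+p) := by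
  induction p generalizing a with
  | zero => simp [giA]
  | succ p ih =>
      rw [show giA a (p+1+1) = gi a * giA (a+1) (p+1) from rfl, ih (a+1),
          show (giA a (p+1) : WB m n) = gi a * giA (a+1) p from rfl,
          mul_assoc, show a+1+p = a+(p+1) from by omega]

lemma gA_app (a p : ℕ) : (gA a (p+1) : WB m n) = gA a p * g (a+p) := by
  induction p generalizing a with
  | zero => simp [gA]
  | succ p ih =>
      rw [show gA a (p+1+1) = g a * gA (a+1) (p+1) from rfl, ih (a+1),
          show (gA a (p+1) : WB m n) = g a * gA (a+1) p from rfl,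
          mul_assoc, show a+1+p = a+(p+1) from by omega]

lemma hA_app (a p : ℕ) : (hA a (p+1) : WB m n) = hA a p * h (a+p) := by
  induction p generalizing a with
  | zero => simp [hA]
  | succ p ih =>
      rw [show hA a (p+1+1) = h a * hA (a+1) (p+1) from rfl, ih (a+1),
          show (hA a (p+1) : WB m n) = h a * hA (a+1) p from rfl,
          mul_assoc, show a+1+p = a+(p+1) from by omega]

lemma hiA_app (a p : ℕ) : (hiA a (p+1) : WB m n) = hiA a p * hi (a+p) := by
  induction p generalizing a with
  | zero => simp [hiA]
  | succ p ih =>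
      rw [show hiA a (p+1+1) = hi a * hiA (a+1) (p+1) from rfl, ih (a+1),
          show (hiA a (p+1) : WB m n) = hi a * hiA (a+1) p from rfl,
          mul_assoc, show a+1+p = a+(p+1) from by omega]

-- bottom peel lemmas for descending products
lemma giD_bot (a p : ℕ) : (giD a (p+1) : WB m n) = giD (a+1) p * gi a := by
  induction p generalizing a with
  | zero => simp [giD]
  | succ p ih =>
      rw [show (giD a (p+1+1) : WB m n) = gi (a+(p+1)) * giD a (p+1) from rfl, ih a,
          show (giD (a+1) (p+1) : WB m n) = gi (a+1+p) * giD (a+1) p from rfl,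
          ← mul_assoc, show a+1+p = a+(p+1) from by omega]

lemma hD_bot (a p : ℕ) : (hD a (p+1) : WB m n) = hD (a+1) p * h a := by
  induction p generalizing a with
  | zero => simp [hD]
  | succ p ih =>
      rw [show (hD a (p+1+1) : WB m n) = h (a+(p+1)) * hD a (p+1) from rfl, ih a,
          show (hD (a+1) (p+1) : WB m n) = h (a+1+p) * hD (a+1) p from rfl,
          ← mul_assoc, show a+1+p = a+(p+1) from by omega]

lemma cblock_app (a p : ℕ) : (cblock a (p+1) : WB m n) = cblock a p * cc (a+p) := by
  induction p generalizing a with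
  | zero => simp [cblock]
  | succ p ih =>
      rw [show (cblock a (p+1+1) : WB m n) = cc a * cblock (a+1) (p+1) from rfl, ih (a+1),
          show (cblock a (p+1) : WB m n) = cc a * cblock (a+1) p from rfl,
          mul_assoc, show a+1+p = a+(p+1) from by omega]

lemma cbar_app (a p : ℕ) : (cbar a (p+1) : WB m n) = cbar a p * cb (a+p) := by
  induction p generalizing a with
  | zero => simp [cbar]
  | succ p ih =>
      rw [show (cbar a (p+1+1) : WB m n) = cb a * cbar (a+1) (p+1) from rfl, ih (a+1),
          show (cbar a (p+1) : WB m n) = cb a * cbar (a+1) p from rfl,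
          mul_assoc, show a+1+p = a+(p+1) from by omega]

-- cancellation of products
lemma hD_hiA (a p : ℕ) : (hD a p : WB m n) * hiA a p = 1 := by
  induction p generalizing a with
  | zero => simp [hD, hiA]
  | succ p ih =>
      rw [hD_bot, show (hiA a (p+1) : WB m n) = hi a * hiA (a+1) p from rfl]
      rw [mul_assoc, ← mul_assoc (h a), h_hi, one_mul, ih (a+1)]

lemma giD_gA (a p : ℕ) : (giD a p : WB m n) * gA a p = 1 := by
  induction p generalizing a with
  | zero => simp [giD, gA]
  | succ p ih =>
      rw [giD_bot, show (gA a (p+1) : WB m n) = g a * gA (a+1) p from rfl]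
      rw [mul_assoc, ← mul_assoc (gi a), gi_g, one_mul, ih (a+1)]

-- generic commute lemmas for product families
lemma commute_giA {x : WB m n} {a p : ℕ} (H : ∀ s, a ≤ s → s < a + p → Commute x (gi s)) :
    Commute x (giA a p) := by
  induction p generalizing a with
  | zero => exact Commute.one_right x
  | succ p ih =>
      rw [show (giA a (p+1) : WB m n) = gi a * giA (a+1) p from rfl]
      exact (H a le_rfl (by omega)).mul_right (ih (fun s h1 h2 => H s (by omega) (by omega)))

lemma commute_gA {x : WB m n} {a p : ℕ} (H : ∀ s, a ≤ s → s < a + p → Commute x (g s)) :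
    Commute x (gA a p) := by
  induction p generalizing a with
  | zero => exact Commute.one_right x
  | succ p ih =>
      rw [show (gA a (p+1) : WB m n) = g a * gA (a+1) p from rfl]
      exact (H a le_rfl (by omega)).mul_right (ih (fun s h1 h2 => H s (by omega) (by omega)))

lemma commute_hA {x : WB m n} {a p : ℕ} (H : ∀ s, a ≤ s → s < a + p → Commute x (h s)) :
    Commute x (hA a p) := by
  induction p generalizing a with
  | zero => exact Commute.one_right x
  | succ p ih =>
      rw [show (hA a (p+1) : WB m n) = h a * hA (a+1) p from rfl]
      exact (H a le_rfl (by omega)).mul_right (ih (fun s h1 h2 => H s (by omega) (by omega)))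

lemma commute_hiA {x : WB m n} {a p : ℕ} (H : ∀ s, a ≤ s → s < a + p → Commute x (hi s)) :
    Commute x (hiA a p) := by
  induction p generalizing a with
  | zero => exact Commute.one_right x
  | succ p ih =>
      rw [show (hiA a (p+1) : WB m n) = hi a * hiA (a+1) p from rfl]
      exact (H a le_rfl (by omega)).mul_right (ih (fun s h1 h2 => H s (by omega) (by omega)))

lemma commute_giD {x : WB m n} {a p : ℕ} (H : ∀ s, a ≤ s → s < a + p → Commute x (gi s)) :
    Commute x (giD a p) := by
  induction p generalizing a with
  | zero => exact Commute.one_right x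
  | succ p ih =>
      rw [show (giD a (p+1) : WB m n) = gi (a+p) * giD a p from rfl]
      exact (H (a+p) (by omega) (by omega)).mul_right (ih (fun s h1 h2 => H s (by omega) (by omega)))

lemma commute_hD {x : WB m n} {a p : ℕ} (H : ∀ s, a ≤ s → s < a + p → Commute x (h s)) :
    Commute x (hD a p) := by
  induction p generalizing a with
  | zero => exact Commute.one_right x
  | succ p ih =>
      rw [show (hD a (p+1) : WB m n) = h (a+p) * hD a p from rfl]
      exact (H (a+p) (by omega) (by omega)).mul_right (ih (fun s h1 h2 => H s (by omega) (by omega)))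

lemma commute_cc {x : WB m n} {s : ℕ} (H1 : Commute x (gi s)) (H2 : Commute x (h s)) :
    Commute x (cc s) := H1.mul_right H2

lemma commute_cb {x : WB m n} {s : ℕ} (H1 : Commute x (g s)) (H2 : Commute x (hi s)) :
    Commute x (cb s) := H1.mul_right H2

lemma commute_cblock {x : WB m n} {a p : ℕ}
    (H1 : ∀ s, a ≤ s → s < a + p → Commute x (gi s))
    (H2 : ∀ s, a ≤ s → s < a + p → Commute x (h s)) :
    Commute x (cblock a p) := by
  induction p generalizing a with
  | zero => exact Commute.one_right x
  | succ p ih =>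
      rw [show (cblock a (p+1) : WB m n) = cc a * cblock (a+1) p from rfl]
      exact (commute_cc (H1 a le_rfl (by omega)) (H2 a le_rfl (by omega))).mul_right
        (ih (fun s u1 u2 => H1 s (by omega) (by omega)) (fun s u1 u2 => H2 s (by omega) (by omega)))

lemma commute_cbar {x : WB m n} {a p : ℕ}
    (H1 : ∀ s, a ≤ s → s < a + p → Commute x (g s))
    (H2 : ∀ s, a ≤ s → s < a + p → Commute x (hi s)) :
    Commute x (cbar a p) := by
  induction p generalizing a with
  | zero => exact Commute.one_right x
  | succ p ih =>
      rw [show (cbar a (p+1) : WB m n) = cb a * cbar (a+1) p from rfl]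
      exact (commute_cb (H1 a le_rfl (by omega)) (H2 a le_rfl (by omega))).mul_right
        (ih (fun s u1 u2 => H1 s (by omega) (by omega)) (fun s u1 u2 => H2 s (by omega) (by omega)))

lemma commute_Dd {x : WB m n} {p : ℕ}
    (H1 : ∀ s, 1 ≤ s → s ≤ p → Commute x (gi s))
    (H2 : ∀ s, 1 ≤ s → s ≤ p → Commute x (h s)) :
    Commute x (Dd p) := by
  induction p with
  | zero => exact Commute.one_right x
  | succ p ih =>
      rw [show (Dd (p+1) : WB m n) = cc (p+1) * Dd p from rfl]
      exact (commute_cc (H1 (p+1) (by omega) le_rfl) (H2 (p+1) (by omega) le_rfl)).mul_right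
        (ih (fun s u1 u2 => H1 s u1 (by omega)) (fun s u1 u2 => H2 s u1 (by omega)))

-- interleaving lemmas
lemma interleave_c (a p : ℕ) : (giA a p : WB m n) * hA a p = cblock a p := by
  induction p generalizing a with
  | zero => simp [giA, hA, cblock]
  | succ p ih =>
      rw [show (giA a (p+1) : WB m n) = gi a * giA (a+1) p from rfl,
          show (hA a (p+1) : WB m n) = h a * hA (a+1) p from rfl,
          show (cblock a (p+1) : WB m n) = cc a * cblock (a+1) p from rfl,
          show (cc a : WB m n) = gi a * h a from rfl]
      have hcom : Commute (h a : WB m n) (giA (a+1) p) :=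
        (commute_giA (fun s _ _ => (cgih s a).symm))
      calc gi a * giA (a+1) p * (h a * hA (a+1) p)
          = gi a * (giA (a+1) p * h a) * hA (a+1) p := by simp [mul_assoc]
        _ = gi a * (h a * giA (a+1) p) * hA (a+1) p := by rw [hcom.eq]
        _ = gi a * h a * (giA (a+1) p * hA (a+1) p) := by simp [mul_assoc]
        _ = gi a * h a * cblock (a+1) p := by rw [ih (a+1)]

lemma interleave_cb (a p : ℕ) : (gA a p : WB m n) * hiA a p = cbar a p := by
  induction p generalizing a with
  | zero => simp [gA, hiA, cbar]
  | succ p ih =>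
      rw [show (gA a (p+1) : WB m n) = g a * gA (a+1) p from rfl,
          show (hiA a (p+1) : WB m n) = hi a * hiA (a+1) p from rfl,
          show (cbar a (p+1) : WB m n) = cb a * cbar (a+1) p from rfl,
          show (cb a : WB m n) = g a * hi a from rfl]
      have hcom : Commute (hi a : WB m n) (gA (a+1) p) :=
        (commute_gA (fun s _ _ => (cghi s a).symm))
      calc g a * gA (a+1) p * (hi a * hiA (a+1) p)
          = g a * (gA (a+1) p * hi a) * hiA (a+1) p := by simp [mul_assoc]
        _ = g a * (hi a * gA (a+1) p) * hiA (a+1) p := by rw [hcom.eq]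
        _ = g a * hi a * (gA (a+1) p * hiA (a+1) p) := by simp [mul_assoc]
        _ = g a * hi a * cbar (a+1) p := by rw [ih (a+1)]

lemma Dd_split (p : ℕ) : (Dd p : WB m n) = giD 1 p * hD 1 p := by
  induction p with
  | zero => simp [Dd, giD, hD]
  | succ p ih =>
      rw [show (Dd (p+1) : WB m n) = cc (p+1) * Dd p from rfl, ih,
          show (giD 1 (p+1) : WB m n) = gi (1+p) * giD 1 p from rfl,
          show (hD 1 (p+1) : WB m n) = h (1+p) * hD 1 p from rfl,
          show (cc (p+1) : WB m n) = gi (p+1) * h (p+1) from rfl]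
      have hcom : Commute (h (p+1) : WB m n) (giD 1 p) :=
        (commute_giD (fun s _ _ => (cgih s (p+1)).symm))
      have e1 : (1+p) = (p+1) := by omega
      rw [e1]
      calc gi (p+1) * h (p+1) * (giD 1 p * hD 1 p)
          = gi (p+1) * (h (p+1) * giD 1 p) * hD 1 p := by simp [mul_assoc]
        _ = gi (p+1) * (giD 1 p * h (p+1)) * hD 1 p := by rw [hcom.eq]
        _ = gi (p+1) * giD 1 p * (h (p+1) * hD 1 p) := by simp [mul_assoc]

end WBP

namespace WBP

variable {m n : ℕ}

lemma cmx {x y : WB m n} (hc : Commute x y) (z : WB m n) : x * (y * z) = y * (x * z) := by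
  rw [← mul_assoc, hc.eq, mul_assoc]

lemma range_gi (k : ℕ) :
    ((List.range k).map (fun j => Htilinv m n (-((j+1:ℕ):ℤ)))).prod = (giA 1 k : WB m n) := by
  induction k with
  | zero => simp [giA]
  | succ k ih =>
      rw [List.range_succ, List.map_append, List.prod_append, ih, List.map_singleton,
          List.prod_singleton, giA_app 1 k, show 1+k = k+1 from by omega]
      rfl

lemma range_h (k : ℕ) :
    ((List.range k).map (fun j => Htil m n ((j+1:ℕ):ℤ))).prod = (hA 1 k : WB m n) := by
  induction k with
  | zero => simp [hA]
  | succ k ih =>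
      rw [List.range_succ, List.map_append, List.prod_append, ih, List.map_singleton,
          List.prod_singleton, hA_app 1 k, show 1+k = k+1 from by omega]
      rfl

lemma ek_succ (k : ℕ) : ek m n (k+1) = Ee * giA 1 k * hA 1 k * ek m n k := by
  show EB m n * _ * _ * ek m n k = _
  rw [range_gi, range_h]
  rfl

lemma ek_zero : ek m n 0 = 1 := rfl

lemma ek_one : ek m n 1 = Ee := by
  rw [ek_succ 0, ek_zero]
  simp [giA, hA]

lemma commute_ek {x : WB m n} {k : ℕ} (HE : 1 ≤ k → Commute x Ee)
    (H1 : ∀ s, 1 ≤ s → s + 1 ≤ k → Commute x (gi s))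
    (H2 : ∀ s, 1 ≤ s → s + 1 ≤ k → Commute x (h s)) :
    Commute x (ek m n k) := by
  induction k with
  | zero => exact Commute.one_right x
  | succ k ih =>
      rw [ek_succ]
      have c1 : Commute x (giA 1 k : WB m n) :=
        commute_giA (fun s u1 (u2 : s < 1 + k) => H1 s u1 (by omega))
      have c2 : Commute x (hA 1 k : WB m n) :=
        commute_hA (fun s u1 (u2 : s < 1 + k) => H2 s u1 (by omega))
      have c3 : Commute x (ek m n k) :=
        ih (fun _ => HE (by omega)) (fun s u1 (u2 : s + 1 ≤ k) => H1 s u1 (by omega))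
           (fun s u1 (u2 : s + 1 ≤ k) => H2 s u1 (by omega))
      simp only [mul_assoc]
      exact (HE (by omega)).mul_right (c1.mul_right (c2.mul_right c3))

lemma lemS {k : ℕ} (hkm : k + 1 ≤ m) (hkn : k + 1 ≤ n) :
    ek m n (k+1) = ek m n k * Dd k * Ee := by
  induction k with
  | zero => rw [ek_one, ek_zero]; simp [Dd]
  | succ k ih =>
      have hcc : Commute (cc (k+1) : WB m n) (ek m n k) := by
        apply commute_ek
        · intro _
          exact Commute.mul_left (cEgi (by omega)).symm (cEh (by omega)).symm
        · intro s u1 u2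
          exact Commute.mul_left (cgigi (show s + 2 ≤ k+1 from by omega)).symm
            (cgih s (k+1)).symm.symm.symm
        · intro s u1 u2
          exact Commute.mul_left (cgih (k+1) s) (chh (show s + 2 ≤ k+1 from by omega)).symm
      rw [ek_succ (k+1)]
      conv_lhs => rw [ih (by omega) (by omega)]
      rw [ek_succ k, show (Dd (k+1) : WB m n) = cc (k+1) * Dd k from rfl]
      rw [mul_assoc (Ee : WB m n) (giA 1 (k+1)), interleave_c 1 (k+1), cblock_app 1 k,
          show 1+k = k+1 from by omega]
      conv_rhs => rw [mul_assoc (Ee : WB m n) (giA 1 k), interleave_c 1 k]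
      simp only [mul_assoc]
      rw [cmx hcc (Dd k * Ee)]

end WBP

namespace WBP

variable {m n : ℕ}

lemma shiftA : ∀ {k i : ℕ}, 1 ≤ i → i + 1 ≤ k → k + 1 ≤ m →
    (g (i+1) : WB m n) * giA 1 k = giA 1 k * g i := by
  intro k
  induction k with
  | zero => intro i h1 h2 h3; omega
  | succ k ih =>
      intro i h1 h2 hm'
      rcases Nat.lt_or_ge (i+1) (k+1) with hlt | hge
      · rw [giA_app 1 k, show 1+k = k+1 from by omega]
        have hc : Commute (g i : WB m n) (gi (k+1)) := cggi (by omega)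
        calc g (i+1) * (giA 1 k * gi (k+1))
            = (g (i+1) * giA 1 k) * gi (k+1) := by rw [mul_assoc]
          _ = (giA 1 k * g i) * gi (k+1) := by
                rw [ih h1 (show i+1 ≤ k from by omega) (show k+1 ≤ m from by omega)]
          _ = giA 1 k * (g i * gi (k+1)) := by rw [mul_assoc]
          _ = giA 1 k * (gi (k+1) * g i) := by rw [hc.eq]
          _ = (giA 1 k * gi (k+1)) * g i := by rw [mul_assoc]
      · have hik : i = k := by omega
        subst hik
        obtain ⟨j, rfl⟩ : ∃ j, i = j + 1 := ⟨i - 1, by omega⟩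
        rw [giA_app 1 (j+1), giA_app 1 j, show 1+j = j+1 from by omega,
            show 1+(j+1) = j+2 from by omega]
        have hc : Commute (g (j+2) : WB m n) (giA 1 j) :=
          commute_giA (fun s u1 u2 => (cgig (show s+2 ≤ j+2 from by omega)).symm)
        have hb := brv3_g (m := m) (n := n) (i := j+1) (by omega) (by omega)
        calc g (j+2) * (giA 1 j * gi (j+1) * gi (j+2))
            = g (j+2) * (giA 1 j * (gi (j+1) * gi (j+2))) := by simp only [mul_assoc]
          _ = giA 1 j * (g (j+2) * (gi (j+1) * gi (j+2))) := by rw [cmx hc]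
          _ = giA 1 j * (gi (j+1) * (gi (j+2) * g (j+1))) := by rw [hb]
          _ = giA 1 j * gi (j+1) * gi (j+2) * g (j+1) := by simp only [mul_assoc]

lemma shiftB : ∀ {k i : ℕ}, 1 ≤ i → i + 1 ≤ k → k + 1 ≤ n →
    (h (i+1) : WB m n) * hA 1 k = hA 1 k * h i := by
  intro k
  induction k with
  | zero => intro i h1 h2 h3; omega
  | succ k ih =>
      intro i h1 h2 hn'
      rcases Nat.lt_or_ge (i+1) (k+1) with hlt | hge
      · rw [hA_app 1 k, show 1+k = k+1 from by omega]
        have hc : Commute (h i : WB m n) (h (k+1)) := chh (by omega)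
        calc h (i+1) * (hA 1 k * h (k+1))
            = (h (i+1) * hA 1 k) * h (k+1) := by rw [mul_assoc]
          _ = (hA 1 k * h i) * h (k+1) := by
                rw [ih h1 (show i+1 ≤ k from by omega) (show k+1 ≤ n from by omega)]
          _ = hA 1 k * (h i * h (k+1)) := by rw [mul_assoc]
          _ = hA 1 k * (h (k+1) * h i) := by rw [hc.eq]
          _ = (hA 1 k * h (k+1)) * h i := by rw [mul_assoc]
      · have hik : i = k := by omega
        subst hik
        obtain ⟨j, rfl⟩ : ∃ j, i = j + 1 := ⟨i - 1, by omega⟩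
        rw [hA_app 1 (j+1), hA_app 1 j, show 1+j = j+1 from by omega,
            show 1+(j+1) = j+2 from by omega]
        have hc : Commute (h (j+2) : WB m n) (hA 1 j) :=
          commute_hA (fun s u1 u2 => (chh (show s+2 ≤ j+2 from by omega)).symm)
        have hb := braid_h (m := m) (n := n) (i := j+1) (by omega) (by omega)
        have hb' : (h (j+2) : WB m n) * (h (j+1) * h (j+2)) = h (j+1) * (h (j+2) * h (j+1)) := by
          have := hb.symm
          simp only [mul_assoc] at this
          exact this
        calc h (j+2) * (hA 1 j * h (j+1) * h (j+2))
            = h (j+2) * (hA 1 j * (h (j+1) * h (j+2))) := by simp only [mul_assoc]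
          _ = hA 1 j * (h (j+2) * (h (j+1) * h (j+2))) := by rw [cmx hc]
          _ = hA 1 j * (h (j+1) * (h (j+2) * h (j+1))) := by rw [hb']
          _ = hA 1 j * h (j+1) * h (j+2) * h (j+1) := by simp only [mul_assoc]

lemma shiftA2 : ∀ {k i : ℕ}, 1 ≤ i → i + 1 ≤ k → k + 1 ≤ m →
    (giD 1 k : WB m n) * g (i+1) = g i * giD 1 k := by
  intro k
  induction k with
  | zero => intro i h1 h2 h3; omega
  | succ k ih =>
      intro i h1 h2 hm'
      rw [show (giD 1 (k+1) : WB m n) = gi (1+k) * giD 1 k from rfl,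
          show 1+k = k+1 from by omega]
      rcases Nat.lt_or_ge (i+1) (k+1) with hlt | hge
      · have hc : Commute (g i : WB m n) (gi (k+1)) := cggi (by omega)
        calc gi (k+1) * giD 1 k * g (i+1)
            = gi (k+1) * (giD 1 k * g (i+1)) := by rw [mul_assoc]
          _ = gi (k+1) * (g i * giD 1 k) := by
                rw [ih h1 (show i+1 ≤ k from by omega) (show k+1 ≤ m from by omega)]
          _ = (gi (k+1) * g i) * giD 1 k := by rw [mul_assoc]
          _ = (g i * gi (k+1)) * giD 1 k := by rw [hc.eq]
          _ = g i * (gi (k+1) * giD 1 k) := by rw [mul_assoc]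
      · have hik : i = k := by omega
        subst hik
        obtain ⟨j, rfl⟩ : ∃ j, i = j + 1 := ⟨i - 1, by omega⟩
        rw [show (giD 1 (j+1) : WB m n) = gi (1+j) * giD 1 j from rfl,
            show 1+j = j+1 from by omega]
        have hc : Commute (g (j+2) : WB m n) (giD 1 j) :=
          commute_giD (fun s u1 u2 => (cgig (show s+2 ≤ j+2 from by omega)).symm)
        have hb := brv4_g (m := m) (n := n) (i := j+1) (by omega) (by omega)
        calc gi (j+2) * (gi (j+1) * giD 1 j) * g (j+2)
            = gi (j+2) * (gi (j+1) * (giD 1 j * g (j+2))) := by simp only [mul_assoc]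
          _ = gi (j+2) * (gi (j+1) * (g (j+2) * giD 1 j)) := by rw [(hc.symm).eq]
          _ = gi (j+2) * (gi (j+1) * g (j+2)) * giD 1 j := by simp only [mul_assoc]
          _ = g (j+1) * (gi (j+2) * gi (j+1)) * giD 1 j := by rw [hb]
          _ = g (j+1) * (gi (j+2) * (gi (j+1) * giD 1 j)) := by simp only [mul_assoc]

lemma shiftB2 : ∀ {k i : ℕ}, 1 ≤ i → i + 1 ≤ k → k + 1 ≤ n →
    (h i : WB m n) * hD 1 k = hD 1 k * h (i+1) := by
  intro k
  induction k with
  | zero => intro i h1 h2 h3; omega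
  | succ k ih =>
      intro i h1 h2 hn'
      rw [show (hD 1 (k+1) : WB m n) = h (1+k) * hD 1 k from rfl,
          show 1+k = k+1 from by omega]
      rcases Nat.lt_or_ge (i+1) (k+1) with hlt | hge
      · have hc : Commute (h i : WB m n) (h (k+1)) := chh (by omega)
        calc h i * (h (k+1) * hD 1 k)
            = (h i * h (k+1)) * hD 1 k := by rw [mul_assoc]
          _ = (h (k+1) * h i) * hD 1 k := by rw [hc.eq]
          _ = h (k+1) * (h i * hD 1 k) := by rw [mul_assoc]
          _ = h (k+1) * (hD 1 k * h (i+1)) := by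
                rw [ih h1 (show i+1 ≤ k from by omega) (show k+1 ≤ n from by omega)]
          _ = h (k+1) * hD 1 k * h (i+1) := by rw [mul_assoc]
      · have hik : i = k := by omega
        subst hik
        obtain ⟨j, rfl⟩ : ∃ j, i = j + 1 := ⟨i - 1, by omega⟩
        rw [show (hD 1 (j+1) : WB m n) = h (1+j) * hD 1 j from rfl,
            show 1+j = j+1 from by omega]
        have hc : Commute (h (j+2) : WB m n) (hD 1 j) :=
          commute_hD (fun s u1 u2 => (chh (show s+2 ≤ j+2 from by omega)).symm)
        have hb := braid_h (m := m) (n := n) (i := j+1) (by omega) (by omega)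
        have hb' : (h (j+1) : WB m n) * (h (j+2) * h (j+1)) = h (j+2) * (h (j+1) * h (j+2)) := by
          simp only [mul_assoc] at hb
          exact hb
        calc h (j+1) * (h (j+2) * (h (j+1) * hD 1 j))
            = h (j+1) * (h (j+2) * h (j+1)) * hD 1 j := by simp only [mul_assoc]
          _ = h (j+2) * (h (j+1) * h (j+2)) * hD 1 j := by rw [hb']
          _ = h (j+2) * (h (j+1) * (h (j+2) * hD 1 j)) := by simp only [mul_assoc]
          _ = h (j+2) * (h (j+1) * (hD 1 j * h (j+2))) := by rw [(hc.symm).eq]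
          _ = h (j+2) * (h (j+1) * hD 1 j) * h (j+2) := by simp only [mul_assoc]

end WBP

namespace WBP

variable {m n : ℕ}

lemma rel8' (hm2 : 2 ≤ m) (hn2 : 2 ≤ n) (z : WB m n) :
    g 1 * (Ee * (gi 1 * (h 1 * (Ee * z)))) = h 1 * (Ee * (gi 1 * (h 1 * (Ee * z)))) := by
  simp only [← mul_assoc]
  rw [rel8 hm2 hn2]

lemma rel7' (hm2 : 2 ≤ m) (hn2 : 2 ≤ n) :
    (Ee : WB m n) * (gi 1 * (h 1 * (Ee * g 1))) = Ee * (gi 1 * (h 1 * (Ee * h 1))) := by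
  have := rel7 (m := m) (n := n) hm2 hn2
  simp only [mul_assoc] at this
  exact this

lemma Lmove : ∀ {k : ℕ}, k ≤ m → k ≤ n → ∀ {i : ℕ}, 1 ≤ i → i + 1 ≤ k →
    (g i : WB m n) * ek m n k = h i * ek m n k := by
  intro k
  induction k with
  | zero => intro _ _ i h1 h2; omega
  | succ k ih =>
      intro hm' hn' i h1 h2
      rw [ek_succ k]
      simp only [mul_assoc]
      rcases Nat.lt_or_ge 1 i with h2i | h1i
      · -- i ≥ 2
        obtain ⟨i0, rfl⟩ : ∃ i0, i = i0 + 1 := ⟨i - 1, by omega⟩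
        have sA' : ∀ z : WB m n, g (i0+1) * (giA 1 k * z) = giA 1 k * (g i0 * z) := by
          intro z
          simp only [← mul_assoc]
          rw [shiftA (show 1 ≤ i0 from by omega) (show i0+1 ≤ k from by omega)
            (show k+1 ≤ m from by omega)]
        have sB' : ∀ z : WB m n, h (i0+1) * (hA 1 k * z) = hA 1 k * (h i0 * z) := by
          intro z
          simp only [← mul_assoc]
          rw [shiftB (show 1 ≤ i0 from by omega) (show i0+1 ≤ k from by omega)
            (show k+1 ≤ n from by omega)]
        have cga : Commute (g i0 : WB m n) (hA 1 k) :=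
          commute_hA (fun s _ _ => cgh i0 s)
        have cgia : Commute (h (i0+1) : WB m n) (giA 1 k) :=
          commute_giA (fun s _ _ => (cgih s (i0+1)).symm)
        have ihz : (g i0 : WB m n) * ek m n k = h i0 * ek m n k :=
          ih (by omega) (by omega) (show 1 ≤ i0 from by omega) (show i0+1 ≤ k from by omega)
        calc g (i0+1) * (Ee * (giA 1 k * (hA 1 k * ek m n k)))
            = Ee * (g (i0+1) * (giA 1 k * (hA 1 k * ek m n k))) := by
              rw [cmx (cEg (by omega)).symm]
          _ = Ee * (giA 1 k * (g i0 * (hA 1 k * ek m n k))) := by rw [sA']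
          _ = Ee * (giA 1 k * (hA 1 k * (g i0 * ek m n k))) := by rw [cmx cga]
          _ = Ee * (giA 1 k * (hA 1 k * (h i0 * ek m n k))) := by rw [ihz]
          _ = Ee * (giA 1 k * (h (i0+1) * (hA 1 k * ek m n k))) := by rw [sB']
          _ = Ee * (h (i0+1) * (giA 1 k * (hA 1 k * ek m n k))) := by rw [cmx cgia.symm]
          _ = h (i0+1) * (Ee * (giA 1 k * (hA 1 k * ek m n k))) := by
              rw [cmx (cEh (by omega)).symm]
      · -- i = 1
        have hi1 : i = 1 := by omega
        subst hi1
        obtain ⟨j, rfl⟩ : ∃ j, k = j + 1 := ⟨k - 1, by omega⟩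
        rw [ek_succ j]
        simp only [mul_assoc]
        rw [show (giA 1 (j+1) : WB m n) = gi 1 * giA 2 j from rfl,
            show (hA 1 (j+1) : WB m n) = h 1 * hA 2 j from rfl]
        simp only [mul_assoc]
        have hc1 : Commute (giA 2 j : WB m n) (h 1) :=
          (commute_giA (fun s _ _ => (cgih s 1).symm)).symm
        have hcE1 : Commute (giA 2 j : WB m n) Ee :=
          (commute_giA (x := Ee) (fun s u1 u2 => cEgi (by omega))).symm
        have hcE2 : Commute (hA 2 j : WB m n) Ee :=
          (commute_hA (x := Ee) (fun s u1 u2 => cEh (by omega))).symm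
        have key : ∀ z : WB m n,
            gi 1 * (giA 2 j * (h 1 * (hA 2 j * (Ee * z))))
              = gi 1 * (h 1 * (Ee * (giA 2 j * (hA 2 j * z)))) := by
          intro z
          rw [cmx hc1, cmx hcE2, cmx hcE1]
        rw [key]
        exact rel8' (by omega) (by omega) _

end WBP

namespace WBP

variable {m n : ℕ}

lemma Rmove : ∀ {k : ℕ}, k ≤ m → k ≤ n → ∀ {i : ℕ}, 1 ≤ i → i + 1 ≤ k →
    ek m n k * g i = ek m n k * h i := by
  intro k
  induction k with
  | zero => intro _ _ i h1 h2; omega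
  | succ k ih =>
      intro hm' hn' i h1 h2
      rw [lemS (show k+1 ≤ m from hm') (show k+1 ≤ n from hn'), Dd_split]
      simp only [mul_assoc]
      rcases Nat.lt_or_ge 1 i with h2i | h1i
      · -- i ≥ 2
        obtain ⟨i0, rfl⟩ : ∃ i0, i = i0 + 1 := ⟨i - 1, by omega⟩
        have sA2' : ∀ z : WB m n, giD 1 k * (g (i0+1) * z) = g i0 * (giD 1 k * z) := by
          intro z
          simp only [← mul_assoc]
          rw [shiftA2 (show 1 ≤ i0 from by omega) (show i0+1 ≤ k from by omega)
            (show k+1 ≤ m from by omega)]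
        have sB2' : ∀ z : WB m n, h i0 * (hD 1 k * z) = hD 1 k * (h (i0+1) * z) := by
          intro z
          simp only [← mul_assoc]
          rw [shiftB2 (show 1 ≤ i0 from by omega) (show i0+1 ≤ k from by omega)
            (show k+1 ≤ n from by omega)]
        have c1 : Commute (hD 1 k : WB m n) (g (i0+1)) :=
          (commute_hD (x := g (i0+1)) (fun s _ _ => cgh (i0+1) s)).symm
        have c2 : Commute (h i0 : WB m n) (giD 1 k) :=
          commute_giD (fun s _ _ => (cgih s i0).symm)
        have ihz : (ek m n k : WB m n) * g i0 = ek m n k * h i0 :=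
          ih (by omega) (by omega) (show 1 ≤ i0 from by omega) (show i0+1 ≤ k from by omega)
        have ihz' : ∀ z : WB m n, ek m n k * (g i0 * z) = ek m n k * (h i0 * z) := by
          intro z
          simp only [← mul_assoc]
          rw [ihz]
        calc ek m n k * (giD 1 k * (hD 1 k * (Ee * g (i0+1))))
            = ek m n k * (giD 1 k * (hD 1 k * (g (i0+1) * Ee))) := by
              rw [(cEg (show 2 ≤ i0+1 from by omega)).eq]
          _ = ek m n k * (giD 1 k * (g (i0+1) * (hD 1 k * Ee))) := by rw [cmx c1]
          _ = ek m n k * (g i0 * (giD 1 k * (hD 1 k * Ee))) := by rw [sA2']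
          _ = ek m n k * (h i0 * (giD 1 k * (hD 1 k * Ee))) := by rw [ihz']
          _ = ek m n k * (giD 1 k * (h i0 * (hD 1 k * Ee))) := by rw [cmx c2]
          _ = ek m n k * (giD 1 k * (hD 1 k * (h (i0+1) * Ee))) := by rw [sB2']
          _ = ek m n k * (giD 1 k * (hD 1 k * (Ee * h (i0+1)))) := by
              rw [(cEh (show 2 ≤ i0+1 from by omega)).eq]
      · -- i = 1
        have hi1 : i = 1 := by omega
        subst hi1
        obtain ⟨j, rfl⟩ : ∃ j, k = j + 1 := ⟨k - 1, by omega⟩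
        rw [giD_bot 1 j, hD_bot 1 j]
        rw [lemS (show j+1 ≤ m from by omega) (show j+1 ≤ n from by omega)]
        simp only [mul_assoc]
        -- goal: ek j * (Dd j * (Ee * (giD 2 j * (gi 1 * (hD 2 j * (h 1 * (Ee * g 1)))))))
        --      = same with trailing h 1
        have c3 : Commute (gi 1 : WB m n) (hD 2 j) :=
          commute_hD (fun s _ _ => cgih 1 s)
        have cE3 : Commute (Ee : WB m n) (giD 2 j) :=
          commute_giD (fun s u1 _ => cEgi (by omega))
        have cE4 : Commute (Ee : WB m n) (hD 2 j) :=
          commute_hD (fun s u1 _ => cEh (by omega))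
        have key : ∀ z : WB m n,
            Ee * (giD 2 j * (gi 1 * (hD 2 j * (h 1 * (Ee * z)))))
              = giD 2 j * (hD 2 j * (Ee * (gi 1 * (h 1 * (Ee * z))))) := by
          intro z
          rw [cmx c3, cmx cE3, cmx cE4]
        rw [key, key, rel7' (by omega) (by omega)]

end WBP

namespace WBP

variable {m n : ℕ}

lemma Linv {k i : ℕ} (hkm : k ≤ m) (hkn : k ≤ n) (h1 : 1 ≤ i) (h2 : i + 1 ≤ k) :
    (gi i : WB m n) * ek m n k = hi i * ek m n k := by
  have hL := Lmove hkm hkn h1 h2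
  rw [g_eq i h1 (by omega), h_eq i h1 (by omega)] at hL
  have e1 := add_mul (gi i : WB m n) (sc dq) (ek m n k)
  have e2 := add_mul (hi i : WB m n) (sc dq) (ek m n k)
  rw [e1, e2] at hL
  calc (gi i : WB m n) * ek m n k
      = (gi i * ek m n k + sc dq * ek m n k) - sc dq * ek m n k := by abel
    _ = (hi i * ek m n k + sc dq * ek m n k) - sc dq * ek m n k := by rw [hL]
    _ = hi i * ek m n k := by abel

lemma Rinv {k i : ℕ} (hkm : k ≤ m) (hkn : k ≤ n) (h1 : 1 ≤ i) (h2 : i + 1 ≤ k) :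
    ek m n k * gi i = ek m n k * hi i := by
  have hR := Rmove hkm hkn h1 h2
  rw [g_eq i h1 (by omega), h_eq i h1 (by omega)] at hR
  have e1 := mul_add (ek m n k) (gi i : WB m n) (sc dq)
  have e2 := mul_add (ek m n k) (hi i : WB m n) (sc dq)
  rw [e1, e2] at hR
  calc ek m n k * (gi i : WB m n)
      = (ek m n k * gi i + ek m n k * sc dq) - ek m n k * sc dq := by abel
    _ = (ek m n k * hi i + ek m n k * sc dq) - ek m n k * sc dq := by rw [hR]
    _ = ek m n k * hi i := by abel

lemma RconvGI {k : ℕ} (hkm : k ≤ m) (hkn : k ≤ n) :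
    ∀ {p : ℕ}, p + 1 ≤ k → ek m n k * giD 1 p = ek m n k * hiA 1 p := by
  intro p
  induction p with
  | zero => intro _; rfl
  | succ p ih =>
      intro hp
      rw [show (giD 1 (p+1) : WB m n) = gi (1+p) * giD 1 p from rfl,
          show 1+p = p+1 from by omega,
          hiA_app 1 p, show 1+p = p+1 from by omega]
      have hc : Commute (hi (p+1) : WB m n) (giD 1 p) :=
        commute_giD (fun s _ _ => (cgihi s (p+1)).symm)
      calc ek m n k * (gi (p+1) * giD 1 p)
          = (ek m n k * gi (p+1)) * giD 1 p := by rw [mul_assoc]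
        _ = (ek m n k * hi (p+1)) * giD 1 p := by
            rw [Rinv hkm hkn (show 1 ≤ p+1 from by omega) (show p+1+1 ≤ k from by omega)]
        _ = ek m n k * (hi (p+1) * giD 1 p) := by rw [mul_assoc]
        _ = ek m n k * (giD 1 p * hi (p+1)) := by rw [hc.eq]
        _ = (ek m n k * giD 1 p) * hi (p+1) := by rw [mul_assoc]
        _ = (ek m n k * hiA 1 p) * hi (p+1) := by rw [ih (by omega)]
        _ = ek m n k * (hiA 1 p * hi (p+1)) := by rw [mul_assoc]

lemma RconvH {k : ℕ} (hkm : k ≤ m) (hkn : k ≤ n) :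
    ∀ {p : ℕ}, p + 1 ≤ k → ek m n k * hD 1 p = ek m n k * gA 1 p := by
  intro p
  induction p with
  | zero => intro _; rfl
  | succ p ih =>
      intro hp
      rw [show (hD 1 (p+1) : WB m n) = h (1+p) * hD 1 p from rfl,
          show 1+p = p+1 from by omega,
          gA_app 1 p, show 1+p = p+1 from by omega]
      have hc : Commute (g (p+1) : WB m n) (hD 1 p) :=
        commute_hD (fun s _ _ => cgh (p+1) s)
      calc ek m n k * (h (p+1) * hD 1 p)
          = (ek m n k * h (p+1)) * hD 1 p := by rw [mul_assoc]
        _ = (ek m n k * g (p+1)) * hD 1 p := by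
            rw [Rmove hkm hkn (show 1 ≤ p+1 from by omega) (show p+1+1 ≤ k from by omega)]
        _ = ek m n k * (g (p+1) * hD 1 p) := by rw [mul_assoc]
        _ = ek m n k * (hD 1 p * g (p+1)) := by rw [hc.eq]
        _ = (ek m n k * hD 1 p) * g (p+1) := by rw [mul_assoc]
        _ = (ek m n k * gA 1 p) * g (p+1) := by rw [ih (by omega)]
        _ = ek m n k * (gA 1 p * g (p+1)) := by rw [mul_assoc]

lemma heckeX : ∀ {p a : ℕ}, 1 ≤ a → a + p + 1 ≤ n →
    (hiA a p : WB m n) * (h (a+p) * hD a p) = h (a+p) * (hD a p * hiA (a+1) p) := by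
  intro p
  induction p with
  | zero =>
      intro a h1 h2
      show (1 : WB m n) * (h (a+0) * 1) = h (a+0) * (1 * 1)
      simp
  | succ p ih =>
      intro a h1 h2
      rcases Nat.eq_zero_or_pos p with hp0 | hp1
      · subst hp0
        have e2 : (hiA (a+1) (0+1) : WB m n) = hi (a+1) := by
          show (hi (a+1) : WB m n) * hiA (a+2) 0 = hi (a+1)
          rw [show (hiA (a+2) 0 : WB m n) = 1 from rfl, mul_one]
        rw [show (hiA a (0+1) : WB m n) = hi a * hiA (a+1) 0 from rfl,
            show (hiA (a+1) 0 : WB m n) = 1 from rfl,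
            show (hD a (0+1) : WB m n) = h (a+0) * hD a 0 from rfl,
            show (hD a 0 : WB m n) = 1 from rfl, e2]
        simp only [one_mul, mul_one, Nat.add_zero]
        exact brv1_h h1 (by omega)
      · obtain ⟨p0, rfl⟩ : ∃ p0, p = p0 + 1 := ⟨p - 1, by omega⟩
        have ihz : ∀ z : WB m n,
            hiA (a+1) (p0+1) * (h (a+1+(p0+1)) * (hD (a+1) (p0+1) * z))
              = h (a+1+(p0+1)) * (hD (a+1) (p0+1) * (hiA (a+2) (p0+1) * z)) := by
          intro z
          have := ih (show 1 ≤ a+1 from by omega) (show (a+1) + (p0+1) + 1 ≤ n from by omega)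
          simp only [← mul_assoc]
          simp only [← mul_assoc] at this
          rw [this]
        have hc : Commute (h a : WB m n) (hiA (a+2) (p0+1)) :=
          commute_hiA (fun s u1 _ => chhi (show a + 2 ≤ s from by omega))
        have c1 : Commute (hi a : WB m n) (h (a+1+(p0+1))) :=
          chih (show a + 2 ≤ a+1+(p0+1) from by omega)
        have c2 : Commute (hi a : WB m n) (hD (a+2) p0) :=
          commute_hD (fun s u1 _ => chih (show a + 2 ≤ s from by omega))
        have brz : ∀ z : WB m n,
            hi a * (h (a+1) * (h a * z)) = h (a+1) * (h a * (hi (a+1) * z)) := by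
          intro z
          have := brv1_h (m := m) (n := n) (i := a) h1 (show a + 2 ≤ n from by omega)
          simp only [← mul_assoc] at this ⊢
          rw [this]
        rw [show (hiA a (p0+1+1) : WB m n) = hi a * hiA (a+1) (p0+1) from rfl,
            hD_bot a (p0+1),
            show a+(p0+1+1) = a+1+(p0+1) from by omega,
            show (hiA (a+1) (p0+1+1) : WB m n) = hi (a+1) * hiA (a+2) (p0+1) from rfl]
        simp only [mul_assoc]
        calc hi a * (hiA (a+1) (p0+1) * (h (a+1+(p0+1)) * (hD (a+1) (p0+1) * h a)))
            = hi a * (h (a+1+(p0+1)) * (hD (a+1) (p0+1) * (hiA (a+2) (p0+1) * h a))) := by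
              rw [ihz]
          _ = hi a * (h (a+1+(p0+1)) * (hD (a+1) (p0+1) * (h a * hiA (a+2) (p0+1)))) := by
              rw [← hc.eq]
          _ = hi a * (h (a+1+(p0+1)) * (hD (a+2) p0 * (h (a+1) * (h a * hiA (a+2) (p0+1))))) := by
              rw [hD_bot (a+1) p0]
              simp only [mul_assoc]
          _ = h (a+1+(p0+1)) * (hD (a+2) p0 * (hi a * (h (a+1) * (h a * hiA (a+2) (p0+1))))) := by
              rw [cmx c1, cmx c2]
          _ = h (a+1+(p0+1)) * (hD (a+2) p0 * (h (a+1) * (h a * (hi (a+1) * hiA (a+2) (p0+1))))) := by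
              rw [brz]
          _ = h (a+1+(p0+1)) * (hD (a+1) (p0+1) * (h a * (hi (a+1) * hiA (a+2) (p0+1)))) := by
              rw [hD_bot (a+1) p0]
              simp only [mul_assoc]

lemma heckeZ : ∀ {p a : ℕ}, 1 ≤ a → a + p + 1 ≤ m →
    (gA a p : WB m n) * (g (a+p) * giD a p) = giD (a+1) p * (g a * gA (a+1) p) := by
  intro p
  induction p with
  | zero =>
      intro a h1 h2
      show (1 : WB m n) * (g (a+0) * 1) = 1 * (g a * 1)
      simp
  | succ p ih =>
      intro a h1 h2
      rw [show (gA a (p+1) : WB m n) = g a * gA (a+1) p from rfl,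
          giD_bot a p, show a + (p+1) = a+1+p from by omega]
      have ihz : ∀ z : WB m n,
          gA (a+1) p * (g (a+1+p) * (giD (a+1) p * z))
            = giD (a+2) p * (g (a+1) * (gA (a+2) p * z)) := by
        intro z
        have := ih (show 1 ≤ a+1 from by omega) (show (a+1) + p + 1 ≤ m from by omega)
        simp only [← mul_assoc]
        simp only [← mul_assoc] at this
        rw [this]
      have hc : Commute (gi a : WB m n) (gA (a+2) p) :=
        commute_gA (fun s u1 _ => (cgig (show a + 2 ≤ s from by omega)))
      have c2 : Commute (g a : WB m n) (giD (a+2) p) :=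
        commute_giD (fun s u1 _ => cggi (show a+2 ≤ s from by omega))
      calc g a * gA (a+1) p * (g (a+1+p) * (giD (a+1) p * gi a))
          = g a * (gA (a+1) p * (g (a+1+p) * (giD (a+1) p * gi a))) := by
            simp only [mul_assoc]
        _ = g a * (giD (a+2) p * (g (a+1) * (gA (a+2) p * gi a))) := by rw [ihz]
        _ = g a * (giD (a+2) p * (g (a+1) * (gi a * gA (a+2) p))) := by rw [(hc.symm).eq]
        _ = giD (a+2) p * ((g a * (g (a+1) * gi a)) * gA (a+2) p) := by
            simp only [mul_assoc]
            rw [cmx c2]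
        _ = giD (a+2) p * ((gi (a+1) * (g a * g (a+1))) * gA (a+2) p) := by
            rw [brv2_g h1 (show a + 2 ≤ m from by omega)]
        _ = giD (a+1) (p+1) * (g a * gA (a+1) (p+1)) := by
            rw [giD_bot (a+1) p,
                show (gA (a+1) (p+1) : WB m n) = g (a+1) * gA (a+2) p from rfl]
            simp only [mul_assoc]

end WBP

namespace WBP

variable {m n : ℕ}

lemma csc (c : KK) (x : WB m n) : Commute (sc c) x := sc_comm c x

lemma Eh1E' (hn2 : 2 ≤ n) (z : WB m n) :
    Ee * (h 1 * (Ee * z)) = sc tv * (Ee * z) := by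
  have := Eh1E (m := m) (n := n) hn2
  simp only [← mul_assoc] at this ⊢
  rw [this]

lemma Eg1E' (hm2 : 2 ≤ m) (z : WB m n) :
    Ee * (g 1 * (Ee * z)) = sc tv * (Ee * z) := by
  have := Eg1E (m := m) (n := n) hm2
  simp only [← mul_assoc] at this ⊢
  rw [this]

lemma T1 {p : ℕ} (hp : 1 ≤ p) (hm2 : p + 2 ≤ m) (hn2 : p + 2 ≤ n) :
    ek m n (p+1) * (h (p+1) * (Dd p * Ee)) = sc tv * ek m n (p+1) := by
  obtain ⟨p0, rfl⟩ : ∃ p0, p = p0 + 1 := ⟨p - 1, by omega⟩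
  rw [Dd_split (p0+1)]
  have c1 : Commute (h (p0+1+1) : WB m n) (giD 1 (p0+1)) :=
    commute_giD (fun s _ _ => (cgih s (p0+1+1)).symm)
  have rconv : ∀ z : WB m n,
      ek m n (p0+1+1) * (giD 1 (p0+1) * z) = ek m n (p0+1+1) * (hiA 1 (p0+1) * z) := by
    intro z
    have := RconvGI (k := p0+1+1) (show p0+1+1 ≤ m from by omega)
      (show p0+1+1 ≤ n from by omega) (show (p0+1) + 1 ≤ p0+1+1 from le_rfl)
    simp only [← mul_assoc] at this ⊢
    rw [this]
  have hx : ∀ z : WB m n, hiA 1 (p0+1) * (h (p0+1+1) * (hD 1 (p0+1) * z))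
      = h (p0+1+1) * (hD 1 (p0+1) * (hiA 2 (p0+1) * z)) := by
    intro z
    have := heckeX (m := m) (n := n) (p := p0+1) (a := 1) le_rfl (show 1 + (p0+1) + 1 ≤ n from by omega)
    rw [show 1 + (p0+1) = p0+1+1 from by omega] at this
    simp only [← mul_assoc] at this ⊢
    rw [this]
  have cE1 : Commute (Ee : WB m n) (hiA 2 (p0+1)) :=
    commute_hiA (fun s u1 _ => cEhi (by omega))
  have cE2 : Commute (Ee : WB m n) (h (p0+1+1)) := cEh (by omega)
  have cE3 : Commute (Ee : WB m n) (hD 2 p0) :=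
    commute_hD (fun s u1 _ => cEh (by omega))
  simp only [mul_assoc]
  rw [cmx c1, rconv, hx, ← cE1.eq, hD_bot 1 p0]
  simp only [mul_assoc]
  rw [lemS (show (p0+1) + 1 ≤ m from by omega) (show (p0+1)+1 ≤ n from by omega)]
  simp only [mul_assoc]
  rw [cmx cE2, cmx cE3, Eh1E' (show 2 ≤ n from by omega)]
  rw [cmx (csc tv _).symm, cmx (csc tv _).symm, cmx (csc tv _).symm, cmx (csc tv _).symm]
  rw [← cmx cE3 (hiA 2 (p0+1)), ← cmx cE2 (hD 2 p0 * hiA 2 (p0+1))]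
  rw [show (h (p0+1+1) * (hD 2 p0 * hiA 2 (p0+1)) : WB m n) = 1 from by
        rw [← mul_assoc,
            show (h (p0+1+1) * hD 2 p0 : WB m n) = hD 2 (p0+1) from by
              rw [show (hD 2 (p0+1) : WB m n) = h (2+p0) * hD 2 p0 from rfl,
                  show 2 + p0 = p0+1+1 from by omega],
            hD_hiA]]
  rw [mul_one]

lemma T2 {p : ℕ} (hp : 1 ≤ p) (hm2 : p + 2 ≤ m) (hn2 : p + 2 ≤ n) :
    ek m n (p+1) * (g (p+1) * (Dd p * Ee)) = sc tv * ek m n (p+1) := by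
  rw [Dd_split p]
  have c1 : Commute (g (p+1) : WB m n) (hD 1 p) :=
    commute_hD (fun s _ _ => cgh (p+1) s)
  have c2 : Commute (giD 1 p : WB m n) (hD 1 p) :=
    commute_hD (fun s _ _ => (commute_giD (x := h s) (fun t _ _ => (cgih t s).symm)).symm)
  have rconv : ∀ z : WB m n,
      ek m n (p+1) * (hD 1 p * z) = ek m n (p+1) * (gA 1 p * z) := by
    intro z
    have := RconvH (k := p+1) (show p+1 ≤ m from by omega) (show p+1 ≤ n from by omega)
      (show p + 1 ≤ p+1 from le_rfl)
    simp only [← mul_assoc] at this ⊢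
    rw [this]
  have hz : ∀ z : WB m n, gA 1 p * (g (p+1) * (giD 1 p * z))
      = giD 2 p * (g 1 * (gA 2 p * z)) := by
    intro z
    have := heckeZ (m := m) (n := n) (p := p) (a := 1) le_rfl (show 1 + p + 1 ≤ m from by omega)
    rw [show 1 + p = p + 1 from by omega] at this
    simp only [← mul_assoc] at this ⊢
    rw [this]
  have cE1 : Commute (Ee : WB m n) (gA 2 p) :=
    commute_gA (fun s u1 _ => cEg (by omega))
  have cE2 : Commute (Ee : WB m n) (giD 2 p) :=
    commute_giD (fun s u1 _ => cEgi (by omega))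
  simp only [mul_assoc]
  -- ek (p+1) * (g (p+1) * (giD 1 p * (hD 1 p * Ee)))
  rw [cmx c2, cmx c1]
  -- ek (p+1) * (hD 1 p * (g (p+1) * (giD 1 p * Ee)))
  rw [rconv, hz, ← cE1.eq]
  -- ek (p+1) * (giD 2 p * (g 1 * (Ee * gA 2 p)))
  obtain ⟨p0, rfl⟩ : ∃ p0, p = p0 + 1 := ⟨p - 1, by omega⟩
  rw [lemS (show p0+1+1 ≤ m from by omega) (show p0+1+1 ≤ n from by omega)]
  simp only [mul_assoc]
  rw [cmx cE2, Eg1E' (show 2 ≤ m from by omega)]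
  rw [cmx (csc tv _).symm, cmx (csc tv _).symm, cmx (csc tv _).symm]
  rw [← cmx cE2 (gA 2 (p0+1)), giD_gA, mul_one]

lemma cbcc {j : ℕ} (h1 : 1 ≤ j) (hjm : j + 1 ≤ m) (hjn : j + 1 ≤ n) :
    (cb j : WB m n) + sc dq * g j = cc j + sc dq * h j := by
  have e1 : (g j : WB m n) * h j = cb j + sc dq * g j := by
    rw [show (cb j : WB m n) = g j * hi j from rfl, h_eq j h1 hjn]
    rw [mul_add, sc_comm]
  have e2 : (g j : WB m n) * h j = cc j + sc dq * h j := by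
    rw [show (cc j : WB m n) = gi j * h j from rfl, g_eq j h1 hjm]
    rw [add_mul]
  rw [← e1, e2]

lemma keylem {p : ℕ} (hm2 : p + 2 ≤ m) (hn2 : p + 2 ≤ n) :
    ek m n (p+1) * (cb (p+1) * (Dd p * Ee)) = ek m n (p+2) := by
  have hstep : ek m n (p+1) * (cb (p+1) * (Dd p * Ee))
      = ek m n (p+1) * (cc (p+1) * (Dd p * Ee)) := by
    rcases Nat.eq_zero_or_pos p with hp0 | hp1
    · subst hp0
      rw [ek_one, show (Dd 0 : WB m n) = 1 from rfl, one_mul]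
      have key : ∀ x y : WB m n, x + sc dq * (Ee * (g 1 * Ee)) = y + sc dq * (Ee * (h 1 * Ee))
          → x = y := by
        intro x y hxy
        have e1 : (Ee : WB m n) * (g 1 * Ee) = sc tv * Ee := by
          have := Eg1E (m := m) (n := n) (by omega)
          simp only [mul_assoc] at this; exact this
        have e2 : (Ee : WB m n) * (h 1 * Ee) = sc tv * Ee := by
          have := Eh1E (m := m) (n := n) (by omega)
          simp only [mul_assoc] at this; exact this
        rw [e1, e2] at hxy
        calc x = (x + sc dq * (sc tv * Ee)) - sc dq * (sc tv * Ee) := by abel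
          _ = (y + sc dq * (sc tv * Ee)) - sc dq * (sc tv * Ee) := by rw [hxy]
          _ = y := by abel
      apply key
      calc Ee * (cb 1 * Ee) + sc dq * (Ee * (g 1 * Ee))
          = Ee * ((cb 1 + sc dq * g 1) * Ee) := by
            rw [add_mul, mul_add]
            rw [show (Ee : WB m n) * (sc dq * g 1 * Ee) = sc dq * (Ee * (g 1 * Ee)) from by
              simp only [mul_assoc]
              rw [cmx (csc dq Ee).symm]]
        _ = Ee * ((cc 1 + sc dq * h 1) * Ee) := by rw [cbcc (by omega) (by omega) (by omega)]
        _ = Ee * (cc 1 * Ee) + sc dq * (Ee * (h 1 * Ee)) := by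
            rw [add_mul, mul_add]
            rw [show (Ee : WB m n) * (sc dq * h 1 * Ee) = sc dq * (Ee * (h 1 * Ee)) from by
              simp only [mul_assoc]
              rw [cmx (csc dq Ee).symm]]
    · have t1 := T1 (p := p) hp1 hm2 hn2
      have t2 := T2 (p := p) hp1 hm2 hn2
      have key : ∀ x y : WB m n,
          x + sc dq * (ek m n (p+1) * (g (p+1) * (Dd p * Ee)))
            = y + sc dq * (ek m n (p+1) * (h (p+1) * (Dd p * Ee))) → x = y := by
        intro x y hxy
        rw [t1, t2] at hxy
        calc x = (x + sc dq * (sc tv * ek m n (p+1))) - sc dq * (sc tv * ek m n (p+1)) := by abel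
          _ = (y + sc dq * (sc tv * ek m n (p+1))) - sc dq * (sc tv * ek m n (p+1)) := by rw [hxy]
          _ = y := by abel
      apply key
      calc ek m n (p+1) * (cb (p+1) * (Dd p * Ee))
            + sc dq * (ek m n (p+1) * (g (p+1) * (Dd p * Ee)))
          = ek m n (p+1) * ((cb (p+1) + sc dq * g (p+1)) * (Dd p * Ee)) := by
            rw [add_mul, mul_add]
            rw [show ek m n (p+1) * (sc dq * g (p+1) * (Dd p * Ee))
                = sc dq * (ek m n (p+1) * (g (p+1) * (Dd p * Ee))) from by
              simp only [mul_assoc]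
              rw [cmx (csc dq (ek m n (p+1))).symm]]
        _ = ek m n (p+1) * ((cc (p+1) + sc dq * h (p+1)) * (Dd p * Ee)) := by
            rw [cbcc (by omega) (by omega) (by omega)]
        _ = ek m n (p+1) * (cc (p+1) * (Dd p * Ee))
            + sc dq * (ek m n (p+1) * (h (p+1) * (Dd p * Ee))) := by
            rw [add_mul, mul_add]
            rw [show ek m n (p+1) * (sc dq * h (p+1) * (Dd p * Ee))
                = sc dq * (ek m n (p+1) * (h (p+1) * (Dd p * Ee))) from by
              simp only [mul_assoc]
              rw [cmx (csc dq (ek m n (p+1))).symm]]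
  rw [hstep]
  rw [lemS (show (p+1) + 1 ≤ m from hm2) (show (p+1)+1 ≤ n from hn2),
      show (Dd (p+1) : WB m n) = cc (p+1) * Dd p from rfl]
  simp only [mul_assoc]

end WBP

namespace WBP

variable {m n : ℕ}

lemma Nb_zero (p : ℕ) : (Nb 0 p : WB m n) = 1 := by
  induction p with
  | zero => rfl
  | succ p ih =>
      rw [show (Nb 0 (p+1) : WB m n) = cblock (p+1) 0 * Nb 0 p from rfl, ih,
          show (cblock (p+1) 0 : WB m n) = 1 from rfl, one_mul]

lemma commute_Nb' {x : WB m n} {r p : ℕ}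
    (H1 : ∀ s, 2 ≤ s → s < p + r + 2 → Commute x (gi s))
    (H2 : ∀ s, 2 ≤ s → s < p + r + 2 → Commute x (h s)) :
    Commute x (Nb' r p) := by
  induction p with
  | zero => exact Commute.one_right x
  | succ p ih =>
      rw [show (Nb' r (p+1) : WB m n) = cblock (p+2) r * Nb' r p from rfl]
      exact (commute_cblock
          (fun s u1 u2 => H1 s (by omega) (by omega))
          (fun s u1 u2 => H2 s (by omega) (by omega))).mul_right
        (ih (fun s u1 u2 => H1 s u1 (by omega)) (fun s u1 u2 => H2 s u1 (by omega)))

lemma Nsplit (r : ℕ) : ∀ p : ℕ, (Nb (r+1) p : WB m n) = Dd p * Nb' r p := by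
  intro p
  induction p with
  | zero => rw [show (Nb (r+1) 0 : WB m n) = 1 from rfl]; simp [Dd, Nb']
  | succ p ih =>
      rw [show (Nb (r+1) (p+1) : WB m n) = cblock (p+1) (r+1) * Nb (r+1) p from rfl, ih,
          show (cblock (p+1) (r+1) : WB m n) = cc (p+1) * cblock (p+2) r from rfl,
          show (Dd (p+1) : WB m n) = cc (p+1) * Dd p from rfl,
          show (Nb' r (p+1) : WB m n) = cblock (p+2) r * Nb' r p from rfl]
      have hc : Commute (cblock (p+2) r : WB m n) (Dd p) := by
        apply commute_Dd
        · intro s u1 u2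
          exact (commute_cblock (x := gi s)
            (fun t t1 t2 => cgigi (show s + 2 ≤ t from by omega))
            (fun t t1 t2 => cgih s t)).symm
        · intro s u1 u2
          exact (commute_cblock (x := h s)
            (fun t t1 t2 => (cgih t s).symm)
            (fun t t1 t2 => chh (show s + 2 ≤ t from by omega))).symm
      calc cc (p+1) * cblock (p+2) r * (Dd p * Nb' r p)
          = cc (p+1) * (cblock (p+2) r * (Dd p * Nb' r p)) := by simp only [mul_assoc]
        _ = cc (p+1) * (Dd p * (cblock (p+2) r * Nb' r p)) := by rw [cmx hc]
        _ = cc (p+1) * Dd p * (cblock (p+2) r * Nb' r p) := by simp only [mul_assoc]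

lemma N'join (r : ℕ) : ∀ p : ℕ, (Nb' r p : WB m n) * cblock 1 r = Nb r (p+1) := by
  intro p
  induction p with
  | zero =>
      rw [show (Nb' r 0 : WB m n) = 1 from rfl, one_mul,
          show (Nb r (0+1) : WB m n) = cblock 1 r * Nb r 0 from rfl,
          show (Nb r 0 : WB m n) = 1 from rfl, mul_one]
  | succ p ih =>
      rw [show (Nb' r (p+1) : WB m n) = cblock (p+2) r * Nb' r p from rfl,
          show (Nb r (p+1+1) : WB m n) = cblock (p+2) r * Nb r (p+1) from rfl,
          mul_assoc, ih]

lemma Glem : ∀ (r : ℕ), ∀ p : ℕ, p + 1 + r ≤ m → p + 1 + r ≤ n →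
    ek m n (p+1) * (cbar (p+1) r * (Nb r p * ek m n r)) = ek m n (p+1+r) := by
  intro r
  induction r with
  | zero =>
      intro p _ _
      rw [show (cbar (p+1) 0 : WB m n) = 1 from rfl, Nb_zero, ek_zero]
      simp
  | succ r ih =>
      intro p hm' hn'
      have her : ek m n (r+1) = Ee * (cblock 1 r * ek m n r) := by
        rw [ek_succ r, mul_assoc (Ee : WB m n), interleave_c, mul_assoc]
      rw [show (cbar (p+1) (r+1) : WB m n) = cb (p+1) * cbar (p+2) r from rfl,
          Nsplit r p, her]
      have hc1 : Commute (cbar (p+2) r : WB m n) (Dd p) := by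
        apply commute_Dd
        · intro s u1 u2
          exact (commute_cbar (x := gi s)
            (fun t t1 t2 => (cgig (show s + 2 ≤ t from by omega)))
            (fun t t1 t2 => cgihi s t)).symm
        · intro s u1 u2
          exact (commute_cbar (x := h s)
            (fun t t1 t2 => (cgh t s).symm)
            (fun t t1 t2 => chhi (show s + 2 ≤ t from by omega))).symm
      have hc2 : Commute (Ee : WB m n) (Nb' r p) :=
        commute_Nb' (fun s u1 _ => cEgi u1) (fun s u1 _ => cEh u1)
      have hc3 : Commute (Ee : WB m n) (cbar (p+2) r) :=
        commute_cbar (fun s u1 _ => cEg (by omega)) (fun s u1 _ => cEhi (by omega))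
      have keyz : ∀ z : WB m n,
          ek m n (p+1) * (cb (p+1) * (Dd p * (Ee * z))) = ek m n (p+2) * z := by
        intro z
        have := keylem (p := p) (show p + 2 ≤ m from by omega) (show p + 2 ≤ n from by omega)
        simp only [← mul_assoc] at this ⊢
        rw [this]
      have joinz : ∀ w : WB m n, (Nb' r p : WB m n) * (cblock 1 r * w) = Nb r (p+1) * w := by
        intro w
        rw [← mul_assoc, N'join]
      calc ek m n (p+1) * (cb (p+1) * cbar (p+2) r * (Dd p * Nb' r p * (Ee * (cblock 1 r * ek m n r))))
          = ek m n (p+1) * (cb (p+1) * (cbar (p+2) r * (Dd p * (Nb' r p * (Ee * (cblock 1 r * ek m n r)))))) := by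
            simp only [mul_assoc]
        _ = ek m n (p+1) * (cb (p+1) * (Dd p * (cbar (p+2) r * (Nb' r p * (Ee * (cblock 1 r * ek m n r)))))) := by
            rw [cmx hc1]
        _ = ek m n (p+1) * (cb (p+1) * (Dd p * (cbar (p+2) r * (Ee * (Nb' r p * (cblock 1 r * ek m n r)))))) := by
            rw [cmx hc2.symm]
        _ = ek m n (p+1) * (cb (p+1) * (Dd p * (Ee * (cbar (p+2) r * (Nb' r p * (cblock 1 r * ek m n r)))))) := by
            rw [cmx hc3.symm]
        _ = ek m n (p+2) * (cbar (p+2) r * (Nb' r p * (cblock 1 r * ek m n r))) := by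
            rw [keyz]
        _ = ek m n (p+2) * (cbar (p+2) r * (Nb r (p+1) * ek m n r)) := by
            rw [joinz]
        _ = ek m n (p+1+(r+1)) := by
            have := ih (p+1) (show (p+1) + 1 + r ≤ m from by omega)
              (show (p+1) + 1 + r ≤ n from by omega)
            rw [show p+1+1 = p+2 from by omega] at this
            rw [this, show p+1+1+r = p+1+(r+1) from by omega]

end WBP

namespace WBP

variable {m n : ℕ}

section bar

variable (σ : KK →+* KK) (hσq : σ qv = qv⁻¹)
variable (f : WB m n →+* WB m n)
variable (hf : ∀ c : KK, f (algebraMap KK (WB m n) c) = algebraMap KK (WB m n) (σ c))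
variable (hfH : ∀ (i : ℤ) (h : validIdx m n i), f (HB m n i h) = HBinv m n i h)
variable (hfE : f (EB m n) = EB m n)

lemma sigma_dq (hσq : σ qv = qv⁻¹) : σ dq + dq = 0 := by
  have h1 : σ dq = qv⁻¹ - qv := by
    rw [show dq = qv - qv⁻¹ from rfl, map_sub, hσq, map_inv₀, hσq, inv_inv]
  rw [h1, show dq = qv - qv⁻¹ from rfl]
  ring

include hσq hf hfH in
lemma f_Htilinv (i : ℤ) : f (Htilinv m n i) = Htil m n i := by
  unfold Htil Htilinv
  split_ifs with hv
  · have hadd : HBinv m n i hv + sc dq = HB m n i hv := by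
      show HB m n i hv - sc dq + sc dq = HB m n i hv
      abel
    have h2 := congrArg f hadd
    rw [map_add, hfH i hv] at h2
    rw [show (sc dq : WB m n) = algebraMap KK (WB m n) dq from rfl, hf,
        show (algebraMap KK (WB m n)) (σ dq) = sc (σ dq) from rfl] at h2
    -- h2 : HBinv + sc (σ dq) = HBinv? no: f HBinv + sc (σ dq) = HBinv
    have h3 : f (HBinv m n i hv) = HBinv m n i hv - sc (σ dq) := by
      calc f (HBinv m n i hv) = f (HBinv m n i hv) + sc (σ dq) - sc (σ dq) := by abel
        _ = HBinv m n i hv - sc (σ dq) := by rw [h2]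
    rw [h3]
    have h4 : (sc (σ dq) : WB m n) + sc dq = 0 := by
      rw [show (sc (σ dq) : WB m n) = algebraMap KK _ (σ dq) from rfl,
          show (sc dq : WB m n) = algebraMap KK _ dq from rfl, ← map_add,
          sigma_dq σ hσq, map_zero]
    have h5 : (HBinv m n i hv : WB m n) = HB m n i hv - sc dq := rfl
    rw [h5]
    calc HB m n i hv - sc dq - sc (σ dq)
        = HB m n i hv - (sc (σ dq) + sc dq) := by abel
      _ = HB m n i hv := by rw [h4]; abel
  · exact map_one f

include hfH in
lemma f_Htil (i : ℤ) : f (Htil m n i) = Htilinv m n i := by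
  unfold Htil Htilinv
  split_ifs with hv
  · exact hfH i hv
  · exact map_one f

include hσq hf hfH in
lemma f_gi (i : ℕ) : f (gi i : WB m n) = g i := f_Htilinv σ hσq f hf hfH _

include hfH in
lemma f_h (i : ℕ) : f (h i : WB m n) = hi i := f_Htil f hfH _

include hσq hf hfH in
lemma f_giA (a p : ℕ) : f (giA a p : WB m n) = gA a p := by
  induction p generalizing a with
  | zero => exact map_one f
  | succ p ih =>
      rw [show (giA a (p+1) : WB m n) = gi a * giA (a+1) p from rfl, map_mul,
          f_gi σ hσq f hf hfH, ih (a+1)]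
      rfl

include hfH in
lemma f_hA (a p : ℕ) : f (hA a p : WB m n) = hiA a p := by
  induction p generalizing a with
  | zero => exact map_one f
  | succ p ih =>
      rw [show (hA a (p+1) : WB m n) = h a * hA (a+1) p from rfl, map_mul,
          f_h f hfH, ih (a+1)]
      rfl

end bar

end WBP

/-- The elements `e_k` (for `0 ≤ k ≤ min{m,n}`) are invariant under the bar involution,
i.e. under any ring homomorphism semilinear with respect to the field involution
`q ↦ q⁻¹`, `t ↦ t⁻¹` that sends each `H i` to `H i⁻¹` and fixes `e`. -/
theorem bar_fixes_ek (m n : ℕ) (hm : 1 ≤ m) (hn : 1 ≤ n)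
    (σ : KK →+* KK) (hσq : σ qv = qv⁻¹) (hσt : σ tv = tv⁻¹)
    (f : WB m n →+* WB m n)
    (hf : ∀ c : KK, f (algebraMap KK (WB m n) c) = algebraMap KK (WB m n) (σ c))
    (hfH : ∀ (i : ℤ) (h : validIdx m n i), f (HB m n i h) = HBinv m n i h)
    (hfE : f (EB m n) = EB m n)
    (k : ℕ) (hk : k ≤ min m n) :
    f (ek m n k) = ek m n k := by
  induction k with
  | zero => exact map_one f
  | succ k ih =>
      have hkm : k + 1 ≤ m := le_trans hk (min_le_left m n)
      have hkn : k + 1 ≤ n := le_trans hk (min_le_right m n)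
      have ihe : f (ek m n k) = ek m n k := ih (by omega)
      conv_lhs => rw [WBP.ek_succ k]
      rw [map_mul, map_mul, map_mul,
          show f (WBP.Ee) = WBP.Ee from hfE,
          WBP.f_giA σ hσq f hf hfH, WBP.f_hA f hfH, ihe]
      -- goal : Ee * gA 1 k * hiA 1 k * ek k = ek (k+1)
      rw [mul_assoc (WBP.Ee : WB m n), WBP.interleave_cb]
      -- Ee * cbar 1 k * ek k = ek (k+1)
      have hg := WBP.Glem (m := m) (n := n) k 0 (by omega) (by omega)
      rw [show (0:ℕ)+1 = 1 from rfl] at hg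
      rw [WBP.ek_one (m := m) (n := n)] at hg
      rw [show (WBP.Nb k 0 : WB m n) = 1 from rfl] at hg
      rw [one_mul] at hg
      rw [mul_assoc, hg, show 1 + k = k + 1 from by omega]

end
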